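/- In a directed graph G over X = O ∪ L ∪ S, if there does not exist an inducing path between observed vertices O_i and O_j, then O_i and O_j are d-separated given D-SEP(O_i, O_j) ∪ S, and likewise d-separated given D-SEP(O_j, O_i) ∪ S. -/

import Mathlib

open List

variable {V : Type*}

/-- Ancestor relation: directed path or equality. -/
def Anc (E : V → V → Prop) : V → V → Prop := Relation.ReflTransGen E

/-- `x` is an ancestor of some member of the set `T`. -/
def AncSet (E : V → V → Prop) (T : Set V) (x : V) : Prop := ∃ y ∈ T, Anc E x y

/-- Undirected adjacency underlying a directed graph. -/
def Adjacent (E : V → V → Prop) (x y : V) : Prop := E x y ∨ E y x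

/-- An (undirected) path in the directed graph: consecutive vertices adjacent, no repeats. -/
def IsTrail (E : V → V → Prop) (l : List V) : Prop := l.Chain' (Adjacent E) ∧ l.Nodup

/-- `b` is a collider between `a` and `c`: both edges point into `b`. -/
def ColliderTriple (E : V → V → Prop) (a b c : V) : Prop := E a b ∧ E c b

/-- A path from `x` to `y` that is active (d-connecting) given the conditioning set `C`. -/
def ActivePath (E : V → V → Prop) (C : Set V) (l : List V) (x y : V) : Prop :=
  IsTrail E l ∧ l.head? = some x ∧ l.getLast? = some y ∧
  (∀ a b c, [a, b, c] <:+: l → ColliderTriple E a b c → ∃ d ∈ C, Anc E b d) ∧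
  (∀ a b c, [a, b, c] <:+: l → ¬ ColliderTriple E a b c → b ∉ C)

/-- d-connection given a conditioning set. -/
def DConn (E : V → V → Prop) (C : Set V) (x y : V) : Prop := ∃ l, ActivePath E C l x y

/-- d-separation given a conditioning set. -/
def DSep (E : V → V → Prop) (C : Set V) (x y : V) : Prop := ¬ DConn E C x y

/-- An inducing path between `x` and `y` relative to latent set `L` and selection set `S`. -/
def InducingPath (E : V → V → Prop) (L S : Set V) (l : List V) (x y : V) : Prop :=
  IsTrail E l ∧ l.head? = some x ∧ l.getLast? = some y ∧
  (∀ a b c, [a, b, c] <:+: l → ColliderTriple E a b c → AncSet E ({x, y} ∪ S) b) ∧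
  (∀ a b c, [a, b, c] <:+: l → ¬ ColliderTriple E a b c → b ∈ L)

def HasInducingPath (E : V → V → Prop) (L S : Set V) (x y : V) : Prop :=
  ∃ l, InducingPath E L S l x y

/-- The path ends with an arrowhead at its last vertex (is "into" its last vertex). -/
def IntoLast (E : V → V → Prop) (l : List V) : Prop := ∃ p a b, l = p ++ [a, b] ∧ E a b

/-- The path is into its first vertex. -/
def IntoHead (E : V → V → Prop) (l : List V) : Prop := ∃ a b t, l = a :: b :: t ∧ E b a

/-- The path is out of its first vertex. -/
def OutHead (E : V → V → Prop) (l : List V) : Prop := ∃ a b t, l = a :: b :: t ∧ E a b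

/-- The path is out of its last vertex. -/
def OutLast (E : V → V → Prop) (l : List V) : Prop := ∃ p a b, l = p ++ [a, b] ∧ E b a

/-- Membership in D-SEP(x,y). -/
def InDSEP (E : V → V → Prop) (O L S : Set V) (x y k : V) : Prop :=
  ∃ σ : List V, σ.head? = some x ∧ σ.getLast? = some k ∧ σ.Nodup ∧
    (∀ v ∈ σ, v ∈ O ∧ AncSet E ({x, y} ∪ S) v) ∧
    σ.Chain' (HasInducingPath E L S) ∧
    (∀ a b c, [a, b, c] <:+: σ →
      (∃ l, InducingPath E L S l a b ∧ IntoLast E l) ∧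
      (∃ l, InducingPath E L S l c b ∧ IntoLast E l))

/-- A mixed graph: symmetric adjacency together with arrowhead marks.
`arrow x y` means the edge between `x` and `y` has an arrowhead at `y`. -/
structure Mixed (V : Type*) where
  adj : V → V → Prop
  arrow : V → V → Prop

/-- v-structure `a *→ b ←* c` with `a, c` non-adjacent. -/
def VStruct (H : Mixed V) (a b c : V) : Prop :=
  H.adj a b ∧ H.adj b c ∧ ¬ H.adj a c ∧ H.arrow a b ∧ H.arrow c b

def TriangleIn (H : Mixed V) (a b c : V) : Prop := H.adj a b ∧ H.adj b c ∧ H.adj a c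

/-- Membership in PD-SEP(x) of a mixed graph. -/
def InPDSEP (H : Mixed V) (x k : V) : Prop :=
  ∃ pa : List V, pa.head? = some x ∧ pa.getLast? = some k ∧ pa.Nodup ∧ pa.Chain' H.adj ∧
    ∀ a b c, [a, b, c] <:+: pa → VStruct H a b c ∨ TriangleIn H a b c

/-- The MAAG of a directed graph with latent set `L` and selection set `S`:
adjacency iff an inducing path exists, arrowhead at `y` iff `y ∉ Anc({x} ∪ S)`. -/
def MAAG (E : V → V → Prop) (L S : Set V) : Mixed V where
  adj := fun x y => x ≠ y ∧ HasInducingPath E L S x y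
  arrow := fun x y => (x ≠ y ∧ HasInducingPath E L S x y) ∧ ¬ AncSet E (insert x S) y

/-- Undirected (tail-tail) edge of the MAAG. -/
def UndirMAAG (E : V → V → Prop) (L S : Set V) (a b : V) : Prop :=
  (a ≠ b ∧ HasInducingPath E L S a b) ∧ AncSet E (insert b S) a ∧ AncSet E (insert a S) b

/-- Every edge of the path incident to `v` is into `v`. -/
def EdgesIntoAt (E : V → V → Prop) (l : List V) (v : V) : Prop :=
  ∀ a b, [a, b] <:+: l → (a = v → E b v) ∧ (b = v → E a v)

/-- Every edge of the path incident to `v` is out of `v`. -/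
def EdgesOutAt (E : V → V → Prop) (l : List V) (v : V) : Prop :=
  ∀ a b, [a, b] <:+: l → (a = v → E v b) ∧ (b = v → E v a)

namespace DsepAux

theorem anc_refl {E : V → V → Prop} (a : V) : Anc E a a := Relation.ReflTransGen.refl

theorem anc_trans {E : V → V → Prop} {a b c : V} (h1 : Anc E a b) (h2 : Anc E b c) : Anc E a c :=
  Relation.ReflTransGen.trans h1 h2

theorem ancSet_of_anc {E : V → V → Prop} {T : Set V} {a b : V} (h : Anc E a b)
    (hb : AncSet E T b) : AncSet E T a := by
  obtain ⟨t, ht, h2⟩ := hb; exact ⟨t, ht, anc_trans h h2⟩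

theorem ancSet_of_mem {E : V → V → Prop} {T : Set V} {a : V} (h : a ∈ T) : AncSet E T a :=
  ⟨a, h, anc_refl a⟩

theorem ancSet_mono {E : V → V → Prop} {T T' : Set V} (h : T ⊆ T') {a : V}
    (ha : AncSet E T a) : AncSet E T' a := by
  obtain ⟨t, ht, h2⟩ := ha; exact ⟨t, h ht, h2⟩

/-- first element satisfying `P`. -/
theorem firstHit {α : Type*} (P : α → Prop) :
    ∀ (l : List α), (∃ v ∈ l, P v) → ∃ s z t, l = s ++ z :: t ∧ P z ∧ ∀ u ∈ s, ¬ P u := by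
  intro l
  induction l with
  | nil => rintro ⟨v, hv, _⟩; cases hv
  | cons h t ih =>
    intro hex
    by_cases hP : P h
    · exact ⟨[], h, t, rfl, hP, by simp⟩
    · have hext : ∃ v ∈ t, P v := by
        obtain ⟨v, hv, hPv⟩ := hex
        rcases mem_cons.mp hv with rfl | hv'
        · exact absurd hPv hP
        · exact ⟨v, hv', hPv⟩
      obtain ⟨s, z, t', heq, hz, hcl⟩ := ih hext
      exact ⟨h :: s, z, t', by rw [heq]; rfl, hz, by
        rintro u hu
        rcases mem_cons.mp hu with rfl | hu'
        · exact hP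
        · exact hcl u hu'⟩

/-- last element satisfying `P`. -/
theorem lastHit {α : Type*} (P : α → Prop) :
    ∀ (l : List α), (∃ v ∈ l, P v) → ∃ s z t, l = s ++ z :: t ∧ P z ∧ ∀ u ∈ t, ¬ P u := by
  intro l
  induction l with
  | nil => rintro ⟨v, hv, _⟩; cases hv
  | cons h t ih =>
    intro hex
    by_cases ht : ∃ v ∈ t, P v
    · obtain ⟨s, z, t', heq, hz, hcl⟩ := ih ht
      exact ⟨h :: s, z, t', by rw [heq]; rfl, hz, hcl⟩
    · have Ph : P h := by
        obtain ⟨v, hv, hPv⟩ := hex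
        rcases mem_cons.mp hv with rfl | hv'
        · exact hPv
        · exact (ht ⟨v, hv', hPv⟩).elim
      exact ⟨[], h, t, rfl, Ph, fun u hu hPu => ht ⟨u, hu, hPu⟩⟩

theorem exists_dup_split {α : Type*} :
    ∀ {l : List α}, ¬ l.Nodup → ∃ (s : List α) (u : α) (t₁ t₂ : List α), l = s ++ u :: t₁ ++ u :: t₂ := by
  intro l
  induction l with
  | nil => intro h; exact absurd nodup_nil h
  | cons h t ih =>
    intro hnd
    by_cases hh : h ∈ t
    · obtain ⟨t₁, t₂, heq⟩ := List.append_of_mem hh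
      exact ⟨[], h, t₁, t₂, by rw [heq]; rfl⟩
    · have : ¬ t.Nodup := fun hnd' => hnd (nodup_cons.mpr ⟨hh, hnd'⟩)
      obtain ⟨s, u, t₁, t₂, heq⟩ := ih this
      exact ⟨h :: s, u, t₁, t₂, by rw [heq]; rfl⟩

theorem nodup_split_unique {α : Type*} {c : α} :
    ∀ {s₁ t₁ s₂ t₂ : List α}, (s₁ ++ c :: t₁).Nodup → s₁ ++ c :: t₁ = s₂ ++ c :: t₂ →
      s₁ = s₂ ∧ t₁ = t₂ := by
  intro s₁
  induction s₁ with
  | nil =>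
    intro t₁ s₂ t₂ hnd heq
    cases s₂ with
    | nil =>
      simp only [nil_append, cons.injEq] at heq
      exact ⟨rfl, heq.2⟩
    | cons h2 s₂' =>
      exfalso
      simp only [nil_append, cons_append, cons.injEq] at heq
      have hc : c ∈ t₁ := by rw [heq.2]; simp
      exact (nodup_cons.mp (by simpa using hnd)).1 hc
  | cons h s₁' ih =>
    intro t₁ s₂ t₂ hnd heq
    cases s₂ with
    | nil =>
      exfalso
      simp only [cons_append, nil_append, cons.injEq] at heq
      have hnd' : (h :: (s₁' ++ c :: t₁)).Nodup := by simpa using hnd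
      have hmem : h ∈ s₁' ++ c :: t₁ := by rw [heq.1]; simp
      exact (nodup_cons.mp hnd').1 hmem
    | cons h₂ s₂' =>
      simp only [cons_append, cons.injEq] at heq
      obtain ⟨rfl, heq2⟩ := heq
      have hnd' : (s₁' ++ c :: t₁).Nodup := (nodup_cons.mp (by simpa using hnd)).2
      obtain ⟨h1, h2⟩ := ih hnd' heq2
      exact ⟨by rw [h1], h2⟩

theorem triple_center_mem_tail {α : Type*} {u w w' : α} {l : List α}
    (h : [u, w, w'] <:+: l) : w ∈ l.tail := by
  obtain ⟨s, t, heq⟩ := h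
  subst heq
  cases s with
  | nil => simp
  | cons a s' => simp

theorem triple_center_ne_head {α : Type*} {u w w' a : α} {l : List α} (hnd : l.Nodup)
    (hh : l.head? = some a) (h : [u, w, w'] <:+: l) : w ≠ a := by
  have hw := triple_center_mem_tail h
  cases l with
  | nil => simp at hh
  | cons h0 t =>
    simp only [head?_cons, Option.some_inj] at hh
    subst hh
    intro hEq
    subst hEq
    exact (nodup_cons.mp hnd).1 hw

theorem triple_infix_reverse {α : Type*} {u w w' : α} {l : List α} :
    [u, w, w'] <:+: l.reverse ↔ [w', w, u] <:+: l := by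
  constructor
  · intro h
    have : [w', w, u].reverse <:+: l.reverse := by simpa using h
    simpa using (List.reverse_infix.mp this)
  · intro h
    have : [w', w, u].reverse <:+: l.reverse := List.reverse_infix.mpr h
    simpa using this

theorem triple_center_ne_last {α : Type*} {u w w' b : α} {l : List α} (hnd : l.Nodup)
    (hl : l.getLast? = some b) (h : [u, w, w'] <:+: l) : w ≠ b := by
  have h' : [w', w, u] <:+: l.reverse := by
    rw [triple_infix_reverse]; simpa using h
  exact triple_center_ne_head (by simpa using hnd) (by simpa using hl) h'

theorem mem_interior_triple {α : Type*} {l : List α} {v a b : α}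
    (ha : l.head? = some a) (hb : l.getLast? = some b) (hv : v ∈ l)
    (h1 : v ≠ a) (h2 : v ≠ b) : ∃ u w', [u, v, w'] <:+: l := by
  obtain ⟨s, t, heq⟩ := List.append_of_mem hv
  subst heq
  have hs : s ≠ [] := by
    rintro rfl
    simp only [nil_append, head?_cons, Option.some_inj] at ha
    exact h1 ha
  have ht : t ≠ [] := by
    rintro rfl
    rw [getLast?_concat] at hb
    exact h2 (Option.some_inj.mp hb)
  obtain ⟨s', u, rfl⟩ : ∃ s' u, s = s' ++ [u] := by
    rcases eq_nil_or_concat s with rfl | ⟨s', u, rfl⟩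
    · exact absurd rfl hs
    · exact ⟨s', u, by simp⟩
  obtain ⟨w', t', rfl⟩ : ∃ w' t', t = w' :: t' := by
    cases t with
    | nil => exact absurd rfl ht
    | cons w' t' => exact ⟨w', t', rfl⟩
  exact ⟨u, w', s', t', by simp⟩


theorem infix_triple_append {α : Type*} {u v w j : α} {B : List α} :
    ∀ {A : List α}, [u, v, w] <:+: A ++ j :: B →
      [u, v, w] <:+: A ++ [j] ∨ [u, v, w] <:+: j :: B ∨
      (v = j ∧ A.getLast? = some u ∧ B.head? = some w) := by
  intro A
  induction A with
  | nil => intro h; exact Or.inr (Or.inl h)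
  | cons a₀ A₁ ih =>
    intro h
    rcases infix_cons_iff.mp h with hp | hi
    · obtain ⟨t, ht⟩ := hp
      cases A₁ with
      | nil =>
        have ht2 : u :: v :: w :: t = a₀ :: j :: B := by simpa using ht
        injection ht2 with h1 ht3
        injection ht3 with h2 ht4
        refine Or.inr (Or.inr ⟨h2, by simp [h1], ?_⟩)
        rw [← ht4]; rfl
      | cons a₁ A₂ =>
        cases A₂ with
        | nil =>
          have ht2 : u :: v :: w :: t = a₀ :: a₁ :: j :: B := by simpa using ht
          injection ht2 with h1 ht3
          injection ht3 with h2 ht4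
          injection ht4 with h3 ht5
          subst h1; subst h2; subst h3
          exact Or.inl ⟨[], [], by simp⟩
        | cons a₂ A₃ =>
          have ht2 : u :: v :: w :: t = a₀ :: a₁ :: a₂ :: (A₃ ++ j :: B) := by simpa using ht
          injection ht2 with h1 ht3
          injection ht3 with h2 ht4
          injection ht4 with h3 ht5
          subst h1; subst h2; subst h3
          exact Or.inl ⟨[], A₃ ++ [j], by simp⟩
    · rcases ih hi with h1 | h2 | h3
      · exact Or.inl (h1.trans (by exact (suffix_append [a₀] (A₁ ++ [j])).isInfix))
      · exact Or.inr (Or.inl h2)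
      · refine Or.inr (Or.inr ⟨h3.1, ?_, h3.2.2⟩)
        cases A₁ with
        | nil => simp at h3
        | cons b₁ B₁ => rw [getLast?_cons_cons]; exact h3.2.1

theorem chain'_adj {E : V → V → Prop} {l : List V} (h : l.Chain' E) :
    l.Chain' (Adjacent E) := h.imp (fun _ _ he => Or.inl he)

theorem chain'_adj_reverse {E : V → V → Prop} {l : List V} (h : l.Chain' (Adjacent E)) :
    l.reverse.Chain' (Adjacent E) := by
  show List.IsChain _ _
  rw [List.isChain_reverse]
  exact h.imp (fun _ _ he => he.symm)

theorem edge_of_infix {E : V → V → Prop} {l : List V} {a b : V} (h : l.Chain' E)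
    (hi : [a, b] <:+: l) : E a b := by
  have := h.infix hi
  exact List.isChain_pair.mp this

theorem adj_of_infix {E : V → V → Prop} {l : List V} {a b : V} (h : l.Chain' (Adjacent E))
    (hi : [a, b] <:+: l) : Adjacent E a b := by
  have := h.infix hi
  exact List.isChain_pair.mp this

theorem getLast?_eq_some_split {α : Type*} {l : List α} {z : α} (h : l.getLast? = some z) :
    ∃ s, l = s ++ [z] := by
  rcases eq_nil_or_concat l with rfl | ⟨l2, b, rfl⟩
  · simp at h
  · simp only [concat_eq_append, getLast?_concat, Option.some_inj] at h
    exact ⟨l2, by simp [h]⟩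

theorem exists_concat_pair {α : Type*} {l : List α} {z : α} (h : l.getLast? = some z)
    (h2 : 2 ≤ l.length) : ∃ s ρ, l = s ++ [ρ, z] := by
  obtain ⟨l2, rfl⟩ := getLast?_eq_some_split h
  have hne : l2 ≠ [] := by rintro rfl; simp at h2
  rcases eq_nil_or_concat l2 with rfl | ⟨s, ρ, rfl⟩
  · exact absurd rfl hne
  · exact ⟨s, ρ, by simp⟩

theorem mem_dropLast_split {α : Type*} {l : List α} {u : α} (h : u ∈ l.dropLast) :
    ∃ s t, l = s ++ u :: t ∧ t ≠ [] := by
  rcases eq_nil_or_concat l with rfl | ⟨l2, b, rfl⟩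
  · simp at h
  · simp only [concat_eq_append, dropLast_concat] at h
    obtain ⟨s, t, rfl⟩ := List.append_of_mem h
    exact ⟨s, t ++ [b], by simp, by simp⟩

theorem mem_dropLast_of_ne_last {α : Type*} {l : List α} {u z : α}
    (hz : l.getLast? = some z) (hu : u ∈ l) (hne : u ≠ z) : u ∈ l.dropLast := by
  obtain ⟨l2, rfl⟩ := getLast?_eq_some_split hz
  simp only [dropLast_concat]
  rcases mem_append.mp hu with h | h
  · exact h
  · simp at h; exact absurd h hne

theorem anc_of_chain_mem {E : V → V → Prop} :
    ∀ {l : List V} {u z : V}, l.Chain' E → u ∈ l → l.getLast? = some z → Anc E u z := by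
  intro l
  induction l with
  | nil => intro u z _ hu; cases hu
  | cons h t ih =>
    intro u z hch hu hlast
    cases t with
    | nil =>
      simp at hu hlast
      subst hu; subst hlast; exact anc_refl _
    | cons h2 t2 =>
      have hch2 : (h2 :: t2).Chain' E := hch.tail
      have hlast2 : (h2 :: t2).getLast? = some z := by rwa [getLast?_cons_cons] at hlast
      rcases mem_cons.mp hu with rfl | hu2
      · have he : E u h2 := (List.isChain_cons_cons.mp hch).1
        exact Relation.ReflTransGen.head he (ih hch2 (by simp) hlast2)
      · exact ih hch2 hu2 hlast2

theorem anc_to_chain {E : V → V → Prop} {a b : V} (h : Anc E a b) :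
    ∃ l : List V, l.Chain' E ∧ l.head? = some a ∧ l.getLast? = some b := by
  induction h with
  | refl => exact ⟨[a], List.isChain_singleton a, rfl, rfl⟩
  | @tail b1 c1 _ he ih =>
    obtain ⟨l, hch, hhd, hlast⟩ := ih
    refine ⟨l ++ [c1], ?_, ?_, by simp⟩
    · show List.IsChain _ _
      rw [List.isChain_append]
      refine ⟨hch, by simp, ?_⟩
      intro p hp q hq
      simp only [head?_cons, Option.mem_def, Option.some_inj] at hq
      subst hq
      rw [hlast] at hp
      simp only [Option.mem_def, Option.some_inj] at hp
      subst hp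
      exact he
    · rw [head?_append, hhd]; rfl

/-- minimal directed list to a stopping set -/
theorem exists_min_dirlist_aux {E : V → V → Prop} (STOP : Set V) :
    ∀ (n : ℕ) (l : List V) (c : V), l.length ≤ n → l.Chain' E → l.head? = some c →
      (∃ z ∈ STOP, l.getLast? = some z) →
      ∃ (l' : List V) (z : V), l'.Chain' E ∧ l'.head? = some c ∧ z ∈ STOP ∧
        l'.getLast? = some z ∧ l'.Nodup ∧ ∀ u ∈ l'.dropLast, u ∉ STOP := by
  intro n
  induction n with
  | zero =>
    intro l c hlen _ hhd _
    cases l with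
    | nil => simp at hhd
    | cons h t => simp at hlen
  | succ n ih =>
    intro l c hlen hch hhd hex
    obtain ⟨z, hz, hlast⟩ := hex
    by_cases hclean : ∃ u ∈ l.dropLast, u ∈ STOP
    · obtain ⟨u, hu, huS⟩ := hclean
      obtain ⟨s, t, rfl, ht⟩ := mem_dropLast_split hu
      have hch2 : (s ++ [u]).Chain' E := hch.prefix (by simp)
      have hhd2 : (s ++ [u]).head? = some c := by
        rw [head?_append] at hhd ⊢
        cases s with
        | nil => simpa using hhd
        | cons a s2 => simpa using hhd
      have hlen2 : (s ++ [u]).length ≤ n := by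
        have h1 : (s ++ u :: t).length ≤ n + 1 := hlen
        have h2 : 1 ≤ t.length := by
          cases t with
          | nil => exact absurd rfl ht
          | cons a t2 => simp
        simp only [length_append, length_cons, length_nil] at h1 ⊢
        omega
      exact ih (s ++ [u]) c hlen2 hch2 hhd2 ⟨u, huS, by simp⟩
    · by_cases hnd : l.Nodup
      · exact ⟨l, z, hch, hhd, hz, hlast, hnd, fun u hu huS => hclean ⟨u, hu, huS⟩⟩
      · obtain ⟨s, u, t₁, t₂, rfl⟩ := exists_dup_split hnd
        have hsplit : s ++ u :: t₁ ++ u :: t₂ = (s ++ u :: t₁) ++ (u :: t₂) := by simp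
        have hch2 : (u :: t₂).Chain' E := by
          rw [hsplit] at hch
          exact (List.isChain_append.mp hch).2.1
        have hch1 : (s ++ [u]).Chain' E := hch.prefix (by simp)
        have hchnew : (s ++ u :: t₂).Chain' E := by
          have heq2 : s ++ u :: t₂ = (s ++ [u]) ++ t₂ := by simp
          rw [heq2]
          show List.IsChain _ _
          rw [List.isChain_append]
          refine ⟨hch1, hch2.tail, ?_⟩
          intro p hp q hq
          simp only [getLast?_concat, Option.mem_def, Option.some_inj] at hp
          subst hp
          cases t₂ with
          | nil => simp at hq
          | cons b t₃ =>
            simp only [head?_cons, Option.mem_def, Option.some_inj] at hq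
            subst hq
            exact (List.isChain_cons_cons.mp hch2).1
        have hhdnew : (s ++ u :: t₂).head? = some c := by
          rw [head?_append] at hhd ⊢
          cases s with
          | nil => simpa using hhd
          | cons a s2 => simpa using hhd
        have hlastnew : (s ++ u :: t₂).getLast? = some z := by
          rw [hsplit, getLast?_append] at hlast
          rw [show s ++ u :: t₂ = s ++ (u :: t₂) from rfl, getLast?_append]
          exact hlast
        have hlennew : (s ++ u :: t₂).length ≤ n := by
          have h1 := hlen
          simp only [length_append, length_cons, length_nil] at h1 ⊢
          omega
        exact ih _ c hlennew hchnew hhdnew ⟨z, hz, hlastnew⟩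

theorem exists_min_dirlist {E : V → V → Prop} {STOP : Set V} {c : V}
    (h : ∃ l : List V, l.Chain' E ∧ l.head? = some c ∧ ∃ z ∈ STOP, l.getLast? = some z) :
    ∃ (l : List V) (z : V), l.Chain' E ∧ l.head? = some c ∧ z ∈ STOP ∧
      l.getLast? = some z ∧ l.Nodup ∧ ∀ u ∈ l.dropLast, u ∉ STOP := by
  obtain ⟨l, hch, hhd, hex⟩ := h
  exact exists_min_dirlist_aux STOP l.length l c le_rfl hch hhd hex

theorem intoHead_iff {E : V → V → Prop} {a b : V} {t : List V} :
    IntoHead E (a :: b :: t) ↔ E b a := by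
  constructor
  · rintro ⟨a2, b2, t2, heq, hE⟩
    injection heq with h1 heq2
    injection heq2 with h2 _
    subst h1; subst h2; exact hE
  · intro h; exact ⟨a, b, t, rfl, h⟩

theorem intoLast_iff {E : V → V → Prop} {s t₀ : V} {ξ : List V} :
    IntoLast E (ξ ++ [s, t₀]) ↔ E s t₀ := by
  constructor
  · rintro ⟨p, a2, b2, heq, hE⟩
    have h2 := congrArg List.reverse heq
    simp only [reverse_append, reverse_cons, reverse_nil, nil_append, cons_append,
      append_assoc] at h2
    have h3 : t₀ :: s :: ξ.reverse = b2 :: a2 :: p.reverse := by simpa using h2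
    injection h3 with e1 h4
    injection h4 with e2 _
    subst e1; subst e2; exact hE
  · intro h; exact ⟨ξ, s, t₀, rfl, h⟩

theorem exists_two_head {α : Type*} {χ : List α} (h : 2 ≤ χ.length) :
    ∃ a b t, χ = a :: b :: t := by
  cases χ with
  | nil => simp at h
  | cons a χ2 =>
    cases χ2 with
    | nil => simp at h
    | cons b t => exact ⟨a, b, t, rfl⟩

theorem intoHead_append_iff {E : V → V → Prop} {χ : List V} (h : 2 ≤ χ.length)
    (t₁ t₂ : List V) : IntoHead E (χ ++ t₁) ↔ IntoHead E (χ ++ t₂) := by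
  obtain ⟨a, b, t, rfl⟩ := exists_two_head h
  simp only [cons_append]
  rw [intoHead_iff, intoHead_iff]

theorem intoLast_append_iff {E : V → V → Prop} {χ : List V} (h : 2 ≤ χ.length)
    (s₁ s₂ : List V) : IntoLast E (s₁ ++ χ) ↔ IntoLast E (s₂ ++ χ) := by
  have hne : χ ≠ [] := by rintro rfl; simp at h
  obtain ⟨t2, heq⟩ := getLast?_eq_some_split (getLast?_eq_getLast hne)
  have ht2 : t2 ≠ [] := by rintro rfl; rw [heq] at h; simp at h
  obtain ⟨t, ρ, rfl⟩ : ∃ t ρ, t2 = t ++ [ρ] := by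
    rcases eq_nil_or_concat t2 with rfl | ⟨t, ρ, rfl⟩
    · exact absurd rfl ht2
    · exact ⟨t, ρ, by simp⟩
  rw [heq]
  rw [show s₁ ++ (t ++ [ρ] ++ [χ.getLast hne]) = (s₁ ++ t) ++ [ρ, χ.getLast hne] by simp,
      show s₂ ++ (t ++ [ρ] ++ [χ.getLast hne]) = (s₂ ++ t) ++ [ρ, χ.getLast hne] by simp,
      intoLast_iff, intoLast_iff]

theorem intoLast_reverse_of_intoHead {E : V → V → Prop} {l : List V} (h : IntoHead E l) :
    IntoLast E l.reverse := by
  obtain ⟨a, b, t, rfl, hE⟩ := h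
  exact ⟨t.reverse, b, a, by simp, hE⟩

theorem intoHead_reverse_of_intoLast {E : V → V → Prop} {l : List V} (h : IntoLast E l) :
    IntoHead E l.reverse := by
  obtain ⟨p, a, b, rfl, hE⟩ := h
  exact ⟨b, a, p.reverse, by simp, hE⟩

theorem isTrail_reverse {E : V → V → Prop} {l : List V} (h : IsTrail E l) :
    IsTrail E l.reverse := ⟨chain'_adj_reverse h.1, by simpa using h.2⟩

theorem inducingPath_reverse {E : V → V → Prop} {L S : Set V} {l : List V} {a b : V}
    (h : InducingPath E L S l a b) : InducingPath E L S l.reverse b a := by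
  obtain ⟨ht, hhd, hlast, hcol, hnon⟩ := h
  refine ⟨isTrail_reverse ht, by simpa using hlast, by simpa using hhd, ?_, ?_⟩
  · intro p q r hinf hc
    have h2 : [r, q, p] <:+: l := triple_infix_reverse.mp hinf
    have h3 := hcol r q p h2 ⟨hc.2, hc.1⟩
    refine ancSet_mono ?_ h3
    rw [Set.pair_comm a b]
  · intro p q r hinf hnc
    exact hnon r q p (triple_infix_reverse.mp hinf) (fun hc => hnc ⟨hc.2, hc.1⟩)

theorem activePath_reverse {E : V → V → Prop} {C : Set V} {l : List V} {a b : V}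
    (h : ActivePath E C l a b) : ActivePath E C l.reverse b a := by
  obtain ⟨ht, hhd, hlast, hcol, hnon⟩ := h
  refine ⟨isTrail_reverse ht, by simpa using hlast, by simpa using hhd, ?_, ?_⟩
  · intro p q r hinf hc
    exact hcol r q p (triple_infix_reverse.mp hinf) ⟨hc.2, hc.1⟩
  · intro p q r hinf hnc
    exact hnon r q p (triple_infix_reverse.mp hinf) (fun hc => hnc ⟨hc.2, hc.1⟩)

/-- A link of the chain: an inducing path with optional "into" requirements at the ends. -/
def Link (E : V → V → Prop) (L S : Set V) (u w : V) (fu fw : Prop) : Prop :=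
  ∃ l, InducingPath E L S l u w ∧ (fu → IntoHead E l) ∧ (fw → IntoLast E l)

theorem Link.mono {E : V → V → Prop} {L S : Set V} {u w : V} {fu fw fu' fw' : Prop}
    (h : Link E L S u w fu fw) (h1 : fu' → fu) (h2 : fw' → fw) : Link E L S u w fu' fw' := by
  obtain ⟨l, hi, ha, hb⟩ := h
  exact ⟨l, hi, fun hf => ha (h1 hf), fun hf => hb (h2 hf)⟩

/-- A "good chain" of inducing paths, with all internal into-conditions. -/
def GC (E : V → V → Prop) (L S : Set V) (fa fb : Prop) : List V → Prop
  | [] => True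
  | [_] => True
  | u :: w :: rest => Link E L S u w fa (rest ≠ [] ∨ fb) ∧ GC E L S True fb (w :: rest)

theorem gc_nil {E : V → V → Prop} {L S : Set V} {fa fb : Prop} : GC E L S fa fb [] := by
  rw [GC]; trivial

theorem gc_single {E : V → V → Prop} {L S : Set V} {fa fb : Prop} {u : V} :
    GC E L S fa fb [u] := by
  rw [GC]; trivial

theorem gc_cons₂ {E : V → V → Prop} {L S : Set V} {fa fb : Prop} {u w : V} {rest : List V} :
    GC E L S fa fb (u :: w :: rest) ↔
      Link E L S u w fa (rest ≠ [] ∨ fb) ∧ GC E L S True fb (w :: rest) := by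
  rw [GC]

theorem gc_short {E : V → V → Prop} {L S : Set V} {fa fb : Prop} {l : List V}
    (h : l.length ≤ 1) : GC E L S fa fb l := by
  cases l with
  | nil => exact gc_nil
  | cons u rest =>
    cases rest with
    | nil => exact gc_single
    | cons w rest2 => simp at h

theorem gc_mono {E : V → V → Prop} {L S : Set V} :
    ∀ (cs : List V) (fa fb fa' fb' : Prop), GC E L S fa fb cs → (fa' → fa) → (fb' → fb) →
      GC E L S fa' fb' cs := by
  intro cs
  induction cs with
  | nil => intro _ _ _ _ _ _ _; exact gc_nil
  | cons u rest ih =>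
    intro fa fb fa' fb' hg h1 h2
    cases rest with
    | nil => exact gc_single
    | cons w rest2 =>
      obtain ⟨hl, hg2⟩ := gc_cons₂.mp hg
      exact gc_cons₂.mpr ⟨hl.mono h1 (fun hx => hx.imp id h2), ih True fb True fb' hg2 id h2⟩

theorem gc_tail {E : V → V → Prop} {L S : Set V} {fa fb : Prop} {u : V} {rest : List V}
    (h : GC E L S fa fb (u :: rest)) : GC E L S True fb rest := by
  cases rest with
  | nil => exact gc_nil
  | cons w rest2 => exact (gc_cons₂.mp h).2

theorem gc_suffix {E : V → V → Prop} {L S : Set V} :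
    ∀ (l : List V) (fa fb : Prop) (s : List V), GC E L S fa fb l → s <:+ l → s ≠ l →
      GC E L S True fb s := by
  intro l
  induction l with
  | nil =>
    intro fa fb s _ hs hne
    rw [suffix_nil.mp hs] at hne
    exact absurd rfl hne
  | cons u rest ih =>
    intro fa fb s hg hs hne
    rcases suffix_cons_iff.mp hs with rfl | hs2
    · exact absurd rfl hne
    · by_cases heq : s = rest
      · subst heq; exact gc_tail hg
      · exact ih True fb s (gc_tail hg) hs2 heq

theorem gc_append {E : V → V → Prop} {L S : Set V} :
    ∀ (A : List V) (fa fb : Prop) (z : V) (Bb : List V),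
      GC E L S fa True (A ++ [z]) → GC E L S True fb (z :: Bb) → Bb ≠ [] →
      GC E L S fa fb (A ++ z :: Bb) := by
  intro A
  induction A with
  | nil =>
    intro fa fb z Bb _ h2 _
    exact gc_mono _ True fb fa fb h2 (fun _ => trivial) id
  | cons a₀ A' ih =>
    intro fa fb z Bb h1 h2 hne
    cases A' with
    | nil =>
      obtain ⟨hl, _⟩ := gc_cons₂.mp h1
      exact gc_cons₂.mpr ⟨hl.mono id (fun _ => Or.inr trivial),
        gc_mono _ True fb True fb h2 id id⟩
    | cons a₁ A'' =>
      obtain ⟨hl, hg⟩ := gc_cons₂.mp (show GC E L S fa True (a₀ :: a₁ :: (A'' ++ [z])) from h1)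
      refine gc_cons₂.mpr ⟨hl.mono id (fun _ => Or.inl (by simp)), ?_⟩
      exact ih True fb z Bb hg h2 hne

theorem gc_cut {E : V → V → Prop} {L S : Set V} :
    ∀ (A : List V) (fa fb : Prop) (u : V) (B1 B2 : List V),
      GC E L S fa fb (A ++ u :: B1 ++ u :: B2) → GC E L S fa fb (A ++ u :: B2) := by
  intro A
  induction A with
  | nil =>
    intro fa fb u B1 B2 hg
    cases B2 with
    | nil => exact gc_short (by simp)
    | cons g B3 =>
      have hsuf : (u :: g :: B3) <:+ ([] ++ u :: B1 ++ u :: g :: B3) := ⟨u :: B1, by simp⟩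
      have hne2 : (u :: g :: B3) ≠ ([] ++ u :: B1 ++ u :: g :: B3) := by
        intro hEq
        have := congrArg List.length hEq
        simp only [nil_append, length_cons, length_append] at this
        omega
      have hs := gc_suffix _ fa fb _ hg hsuf hne2
      exact gc_mono _ True fb fa fb hs (fun _ => trivial) id
  | cons a₀ A' ih =>
    intro fa fb u B1 B2 hg
    cases A' with
    | nil =>
      obtain ⟨hl, hg2⟩ := gc_cons₂.mp (show GC E L S fa fb (a₀ :: u :: (B1 ++ u :: B2)) from hg)
      refine gc_cons₂.mpr ⟨hl.mono id (fun hx => hx.elim (fun _ => Or.inl (by simp))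
        (fun hb => Or.inr hb)), ?_⟩
      exact ih True fb u B1 B2 hg2
    | cons a₁ A'' =>
      obtain ⟨hl, hg2⟩ := gc_cons₂.mp
        (show GC E L S fa fb (a₀ :: a₁ :: (A'' ++ u :: B1 ++ u :: B2)) from hg)
      refine gc_cons₂.mpr ⟨hl.mono id (fun _ => Or.inl (by simp)), ?_⟩
      exact ih True fb u B1 B2 hg2

theorem gc_dedup {E : V → V → Prop} {L S : Set V} :
    ∀ (n : ℕ) (σ : List V) (fa fb : Prop), σ.length ≤ n → GC E L S fa fb σ →
      ∃ σ', σ'.Nodup ∧ GC E L S fa fb σ' ∧ σ'.head? = σ.head? ∧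
        σ'.getLast? = σ.getLast? ∧ ∀ w ∈ σ', w ∈ σ := by
  intro n
  induction n with
  | zero =>
    intro σ fa fb hlen hg
    have hσ : σ = [] := by
      cases σ with
      | nil => rfl
      | cons a t => simp at hlen
    subst hσ
    exact ⟨[], by simp, gc_nil, rfl, rfl, by simp⟩
  | succ n ih =>
    intro σ fa fb hlen hg
    by_cases hnd : σ.Nodup
    · exact ⟨σ, hnd, hg, rfl, rfl, fun w hw => hw⟩
    · obtain ⟨s, u, t₁, t₂, rfl⟩ := exists_dup_split hnd
      have hcut : GC E L S fa fb (s ++ u :: t₂) := gc_cut s fa fb u t₁ t₂ hg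
      have hlen2 : (s ++ u :: t₂).length ≤ n := by
        have h1 := hlen
        simp only [length_append, length_cons] at h1 ⊢
        omega
      obtain ⟨σ', h1, h2, h3, h4, h5⟩ := ih (s ++ u :: t₂) fa fb hlen2 hcut
      obtain ⟨q, hq⟩ : ∃ q, (u :: t₂).getLast? = some q :=
        ⟨_, getLast?_eq_getLast (by simp)⟩
      refine ⟨σ', h1, h2, ?_, ?_, ?_⟩
      · rw [h3]; simp [head?_append]
      · rw [h4]
        rw [show s ++ u :: t₁ ++ u :: t₂ = s ++ ((u :: t₁) ++ (u :: t₂)) by simp]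
        rw [show s ++ u :: t₂ = s ++ (u :: t₂) from rfl]
        rw [getLast?_append, getLast?_append, getLast?_append, hq]
        rfl
      · intro w hw
        have := h5 w hw
        simp only [mem_append, mem_cons] at this ⊢
        tauto

theorem gc_chain' {E : V → V → Prop} {L S : Set V} :
    ∀ (cs : List V) (fa fb : Prop), GC E L S fa fb cs →
      cs.Chain' (HasInducingPath E L S) := by
  intro cs
  induction cs with
  | nil => intro _ _ _; exact List.isChain_nil
  | cons u rest ih =>
    intro fa fb hg
    cases rest with
    | nil => exact List.isChain_singleton u
    | cons w rest2 =>
      obtain ⟨⟨l, hi, _, _⟩, hg2⟩ := gc_cons₂.mp hg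
      exact List.isChain_cons_cons.mpr ⟨⟨l, hi⟩, ih True fb hg2⟩

theorem gc_triples {E : V → V → Prop} {L S : Set V} :
    ∀ (cs : List V) (fa fb : Prop), GC E L S fa fb cs →
      ∀ p q r, [p, q, r] <:+: cs →
        (∃ l, InducingPath E L S l p q ∧ IntoLast E l) ∧
        (∃ l, InducingPath E L S l r q ∧ IntoLast E l) := by
  intro cs
  induction cs with
  | nil =>
    intro _ _ _ p q r h
    have := h.length_le
    simp at this
  | cons u rest ih =>
    intro fa fb hg p q r hinf
    rcases infix_cons_iff.mp hinf with hp | hi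
    · obtain ⟨t, ht⟩ := hp
      have ht2 : p :: q :: r :: t = u :: rest := by simpa using ht
      injection ht2 with h1 h2
      subst h1
      subst h2
      obtain ⟨hl1, hg2⟩ := gc_cons₂.mp hg
      obtain ⟨hl2, _⟩ := gc_cons₂.mp hg2
      obtain ⟨l₁, hi1, _, hb1⟩ := hl1
      obtain ⟨l₂, hi2, ha2, _⟩ := hl2
      refine ⟨⟨l₁, hi1, hb1 (Or.inl (by simp))⟩, ?_⟩
      exact ⟨l₂.reverse, inducingPath_reverse hi2, intoLast_reverse_of_intoHead (ha2 trivial)⟩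
    · exact ih True fb (gc_tail hg) p q r hi

theorem head?_append_left {α : Type*} {s t : List α} {a : α} (h : s.head? = some a) :
    (s ++ t).head? = some a := by rw [head?_append, h]; rfl

theorem getLast?_append_right {α : Type*} {s t : List α} {z : α} (h : t.getLast? = some z) :
    (s ++ t).getLast? = some z := by rw [getLast?_append, h]; rfl

theorem getLast?_mem {α : Type*} {l : List α} {z : α} (h : l.getLast? = some z) : z ∈ l := by
  obtain ⟨s, rfl⟩ := getLast?_eq_some_split h
  simp

theorem head?_mem {α : Type*} {l : List α} {a : α} (h : l.head? = some a) : a ∈ l := by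
  cases l with
  | nil => simp at h
  | cons b t => simp at h; subst h; simp

theorem head_ne_last_of_nodup {α : Type*} {l : List α} {e v : α} (hnd : l.Nodup)
    (hh : l.head? = some e) (hl : l.getLast? = some v) (hlen : 2 ≤ l.length) : e ≠ v := by
  obtain ⟨s, rfl⟩ := getLast?_eq_some_split hl
  have hs : s ≠ [] := by rintro rfl; simp at hlen
  have he : e ∈ s := by
    cases s with
    | nil => exact absurd rfl hs
    | cons a s2 =>
      simp only [cons_append, head?_cons, Option.some_inj] at hh
      subst hh; simp
  intro hEq
  subst hEq
  rw [nodup_append] at hnd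
  exact hnd.2.2 e he e (by simp) rfl

theorem triple_center_mem {α : Type*} {u w p : α} {l : List α} (h : [u, w, p] <:+: l) :
    w ∈ l := h.subset (by simp)

/-- every vertex hit by an arrow along a suitable path is an ancestor of T -/
theorem ancT_of_edge_into {E : V → V → Prop} {T : Set V} {p : List V}
    (hch : p.Chain' (Adjacent E))
    (hlast : ∀ w, p.getLast? = some w → AncSet E T w)
    (hcol : ∀ a b c, [a, b, c] <:+: p → ColliderTriple E a b c → AncSet E T b) :
    ∀ (t : List V) (u v : V), (u :: v :: t) <:+ p → E u v → AncSet E T v := by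
  intro t
  induction t with
  | nil =>
    intro u v hsuf _
    apply hlast
    obtain ⟨s, rfl⟩ := hsuf
    exact getLast?_append_right rfl
  | cons w t' ih =>
    intro u v hsuf hE
    obtain ⟨s, rfl⟩ := hsuf
    have htrip : [u, v, w] <:+: s ++ u :: v :: w :: t' := ⟨s, t', by simp⟩
    by_cases hc : ColliderTriple E u v w
    · exact hcol u v w htrip hc
    · have hadj : Adjacent E v w := adj_of_infix hch ⟨s ++ [u], t', by simp⟩
      have hE2 : E v w := by
        rcases hadj with h | h
        · exact h
        · exact absurd ⟨hE, h⟩ hc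
      have hsuf2 : (v :: w :: t') <:+ s ++ u :: v :: w :: t' := ⟨s ++ [u], by simp⟩
      exact ancSet_of_anc (Relation.ReflTransGen.single hE2) (ih v w hsuf2 hE2)

theorem ancT_all {E : V → V → Prop} {T : Set V} {p : List V} {x y : V}
    (htr : IsTrail E p) (hhd : p.head? = some x) (hlast : p.getLast? = some y)
    (hxT : AncSet E T x) (hyT : AncSet E T y)
    (hcol : ∀ a b c, [a, b, c] <:+: p → ColliderTriple E a b c → AncSet E T b) :
    ∀ v ∈ p, AncSet E T v := by
  intro v hv
  obtain ⟨s, t, rfl⟩ := List.append_of_mem hv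
  rcases eq_nil_or_concat s with rfl | ⟨s2, u, heq⟩
  · simp only [nil_append, head?_cons, Option.some_inj] at hhd
    subst hhd; exact hxT
  · subst heq
    simp only [concat_eq_append, append_assoc, cons_append, nil_append] at htr hhd hlast hcol
    have hadj : Adjacent E u v := adj_of_infix htr.1 ⟨s2, t, by simp⟩
    rcases hadj with hE | hE
    · exact ancT_of_edge_into htr.1 (fun w hw => by
        rw [hlast] at hw; injection hw with hw; subst hw; exact hyT) hcol t u v
        ⟨s2, by simp⟩ hE
    · have hrev := ancT_of_edge_into (p := (s2 ++ u :: v :: t).reverse)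
        (chain'_adj_reverse htr.1)
        (fun w hw => by
          rw [getLast?_reverse, hhd] at hw
          injection hw with hw; subst hw; exact hxT)
        (fun a b c hinf hc => hcol c b a (triple_infix_reverse.mp hinf) ⟨hc.2, hc.1⟩)
        s2.reverse v u ⟨t.reverse, by simp⟩ hE
      exact ancSet_of_anc (Relation.ReflTransGen.single hE) hrev

theorem head?_of_append_eq {α : Type*} {P X : List α} {a : α} (hne : P ≠ [])
    (h : (P ++ X).head? = some a) : P.head? = some a := by
  cases P with
  | nil => exact absurd rfl hne
  | cons p0 P' => simpa using h

theorem mem_pair_union_left {S : Set V} (a z : V) : a ∈ ({a, z} : Set V) ∪ S :=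
  Or.inl (Or.inl rfl)

theorem mem_pair_union_mid {S : Set V} (a z : V) : z ∈ ({a, z} : Set V) ∪ S :=
  Or.inl (Or.inr rfl)

theorem singleton_union_subset_pair {S : Set V} (a z : V) :
    ({a} : Set V) ∪ S ⊆ ({a, z} : Set V) ∪ S := by
  rintro v (hv | hv)
  · exact Or.inl (Or.inl hv)
  · exact Or.inr hv

/-- The LEFT surgical trail: along `r` to the cut vertex `w`, then down the descent to `z`. -/
theorem leftLemma {E : V → V → Prop} {O L S : Set V}
    {r P Q D : List V} {a b c z : V}
    (htr : IsTrail E r) (hhd : r.head? = some a) (hlast : r.getLast? = some b)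
    (hrPQ : r = P ++ c :: Q) (hPne : P ≠ [])
    (hPgood : ∀ w ∈ P, ∀ u p, [u, w, p] <:+: r → ColliderTriple E u w p →
      AncSet E ({a} ∪ S) w)
    (hnc : ∀ u w p, [u, w, p] <:+: r → ¬ ColliderTriple E u w p → w ∈ L)
    (hDch : D.Chain' E) (hDhd : D.head? = some c) (hDlast : D.getLast? = some z)
    (hDnd : D.Nodup) (hcL : c ∈ L)
    (hDL : ∀ u ∈ D, u ≠ c → u ≠ z → u ∈ L)
    (haD : a ∉ D)
    (hzP : z ∉ P ++ [c]) :
    ∃ lft, InducingPath E L S lft a z ∧ IntoLast E lft ∧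
      (IntoHead E r → IntoHead E lft) := by
  have hrPC : r = (P ++ [c]) ++ Q := by rw [hrPQ]; simp
  have hPCnd : (P ++ [c]).Nodup := by
    have := htr.2
    rw [hrPC, nodup_append] at this
    exact this.1
  have hPCch : (P ++ [c]).Chain' (Adjacent E) := htr.1.prefix (by rw [hrPC]; simp)
  have hcD : c ∈ D := head?_mem hDhd
  obtain ⟨D₁, w, D₂, hDsplit, hwP, hD₂clean⟩ :=
    lastHit (· ∈ P ++ [c]) D ⟨c, hcD, by simp⟩
  have hwD : w ∈ D := by rw [hDsplit]; simp
  have hD₂ne : D₂ ≠ [] := by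
    rintro rfl
    have hzw : D.getLast? = some w := by rw [hDsplit]; exact getLast?_append_right rfl
    rw [hDlast] at hzw
    injection hzw with hzw
    exact hzP (hzw ▸ hwP)
  have hD₂last : D₂.getLast? = some z := by
    have : D.getLast? = D₂.getLast? := by
      rw [hDsplit, show D₁ ++ w :: D₂ = (D₁ ++ [w]) ++ D₂ by simp, getLast?_append]
      cases D₂ with
      | nil => exact absurd rfl hD₂ne
      | cons d0 D₂' =>
        obtain ⟨q, hq⟩ : ∃ q, (d0 :: D₂').getLast? = some q :=
          ⟨_, getLast?_eq_getLast (by simp)⟩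
        rw [hq]; rfl
    rw [← this, hDlast]
  obtain ⟨Pa, Pb, hPab⟩ := List.append_of_mem hwP
  have hcPa : c ∉ Pa := by
    intro hc
    obtain ⟨π₁, π₂, hπ⟩ := List.append_of_mem hc
    have heq2 : P ++ c :: [] = π₁ ++ c :: (π₂ ++ w :: Pb) := by
      rw [show P ++ c :: [] = P ++ [c] by rfl, hPab, hπ]; simp
    have := nodup_split_unique (by simpa using hPCnd) heq2
    simp at this
  have hPaP : ∀ μ ∈ Pa, μ ∈ P := by
    intro μ hμ
    have : μ ∈ P ++ [c] := by rw [hPab]; simp [hμ]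
    rcases mem_append.mp this with h | h
    · exact h
    · simp at h; subst h; exact absurd hμ hcPa
  have hPhd : P.head? = some a := by
    apply head?_of_append_eq (X := c :: Q) hPne
    rw [← hrPQ]; exact hhd
  have hPChd : (P ++ [c]).head? = some a := head?_append_left hPhd
  have hPane : Pa ≠ [] := by
    rintro rfl
    have hhw : (P ++ [c]).head? = some w := by rw [hPab]; rfl
    rw [hPChd] at hhw
    injection hhw with hhw
    exact haD (hhw ▸ hwD)
  have hPahd : Pa.head? = some a := by
    apply head?_of_append_eq (X := w :: Pb) hPane
    rw [← hPab]
    exact hPChd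
  -- pieces
  have hPawPre : (Pa ++ [w]) <+: (P ++ [c]) := ⟨Pb, by rw [hPab]; simp⟩
  have hPawNd : (Pa ++ [w]).Nodup := hPawPre.sublist.nodup hPCnd
  have hPawInfr : (Pa ++ [w]) <:+: r := by
    rw [hrPC]
    exact (hPawPre.trans (prefix_append _ _)).isInfix
  have hwD₂suf : (w :: D₂) <:+ D := by rw [hDsplit]; exact ⟨D₁, rfl⟩
  have hwD₂ch : (w :: D₂).Chain' E := hDch.infix hwD₂suf.isInfix
  have hwD₂nd : (w :: D₂).Nodup := hwD₂suf.sublist.nodup hDnd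
  have hwD₂last : (w :: D₂).getLast? = some z := by
    cases D₂ with
    | nil => exact absurd rfl hD₂ne
    | cons d0 D₂' => rw [getLast?_cons_cons]; exact hD₂last
  -- the left trail
  set lft := Pa ++ w :: D₂ with hlftdef
  have hlfteq : lft = (Pa ++ [w]) ++ D₂ := by rw [hlftdef]; simp
  have hlftNd : lft.Nodup := by
    rw [hlfteq, nodup_append]
    refine ⟨hPawNd, hwD₂nd.sublist (by simp), ?_⟩
    intro v hv v2 hv2 hvv
    subst hvv
    exact hD₂clean v hv2 (hPawPre.subset hv)
  have hlftCh : lft.Chain' (Adjacent E) := by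
    rw [hlfteq]
    show List.IsChain _ _
    rw [List.isChain_append]
    refine ⟨hPCch.prefix hPawPre, (chain'_adj hwD₂ch).tail, ?_⟩
    intro p1 hp1 q1 hq1
    simp only [getLast?_concat, Option.mem_def, Option.some_inj] at hp1
    subst hp1
    cases D₂ with
    | nil => simp at hq1
    | cons d0 D₂' =>
      simp only [head?_cons, Option.mem_def, Option.some_inj] at hq1
      subst hq1
      exact Or.inl (List.isChain_cons_cons.mp hwD₂ch).1
  have hlftHd : lft.head? = some a := by rw [hlftdef]; exact head?_append_left hPahd
  have hlftLast : lft.getLast? = some z := by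
    rw [hlftdef, show Pa ++ w :: D₂ = (Pa ++ [w]) ++ D₂ by simp]
    exact getLast?_append_right hD₂last
  -- ancestry facts on D
  have hDanc : ∀ u ∈ D, Anc E u z := fun u hu => anc_of_chain_mem hDch hu hDlast
  -- the inducing path conditions
  refine ⟨lft, ⟨⟨hlftCh, hlftNd⟩, hlftHd, hlftLast, ?_, ?_⟩, ?_, ?_⟩
  · -- colliders
    intro u w1 p1 hinf hc
    rcases infix_triple_append (A := Pa) (j := w) (B := D₂) hinf with h1 | h2 | h3
    · -- within Pa ++ [w] : in r
      have hinr : [u, w1, p1] <:+: r := h1.trans hPawInfr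
      have hw1Pa : w1 ∈ Pa := by
        have hm : w1 ∈ Pa ++ [w] := triple_center_mem h1
        have hne : w1 ≠ w := triple_center_ne_last hPawNd (getLast?_concat) h1
        rcases mem_append.mp hm with h | h
        · exact h
        · simp at h; exact absurd h hne
      exact ancSet_mono (singleton_union_subset_pair a z)
        (hPgood w1 (hPaP _ hw1Pa) u p1 hinr hc)
    · -- within w :: D₂ : descends to z
      have hw1D : w1 ∈ D := hwD₂suf.subset (triple_center_mem h2)
      exact ⟨z, mem_pair_union_mid a z, hDanc w1 hw1D⟩
    · -- centered at w
      obtain ⟨rfl, _, _⟩ := h3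
      exact ⟨z, mem_pair_union_mid a z, hDanc w1 hwD⟩
  · -- non-colliders
    intro u w1 p1 hinf hncoll
    rcases infix_triple_append (A := Pa) (j := w) (B := D₂) hinf with h1 | h2 | h3
    · exact hnc u w1 p1 (h1.trans hPawInfr) hncoll
    · have hw1D₂ : w1 ∈ D₂ := triple_center_mem_tail h2
      have hw1D : w1 ∈ D := hwD₂suf.subset (mem_of_mem_tail hw1D₂)
      have hne_z : w1 ≠ z := triple_center_ne_last hwD₂nd hwD₂last h2
      have hne_c : w1 ≠ c := by
        intro h; exact hD₂clean w1 hw1D₂ (h ▸ (by simp : c ∈ P ++ [c]))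
      exact hDL w1 hw1D hne_c hne_z
    · obtain ⟨rfl, _, _⟩ := h3
      by_cases hwc : w1 = c
      · exact hwc ▸ hcL
      · have hne_z : w1 ≠ z := fun h => hzP (h ▸ hwP)
        exact hDL w1 hwD hwc hne_z
  · -- IntoLast
    obtain ⟨ζ, ρ, hζ⟩ := exists_concat_pair hwD₂last (by
      cases D₂ with
      | nil => exact absurd rfl hD₂ne
      | cons d0 D₂' => simp)
    have hE : E ρ z := edge_of_infix hwD₂ch ⟨ζ, [], by rw [hζ]; simp⟩
    refine ⟨Pa ++ ζ, ρ, z, ?_, hE⟩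
    rw [hlftdef, show Pa ++ w :: D₂ = Pa ++ (w :: D₂) from rfl, hζ]
    simp
  · -- IntoHead transfer
    intro hih
    have h2 : 2 ≤ (Pa ++ [w]).length := by
      cases Pa with
      | nil => exact absurd rfl hPane
      | cons p0 Pa' => simp
    have := (intoHead_append_iff (E := E) h2 (Pb ++ Q) D₂).mp
    rw [← hlfteq] at this
    apply this
    rw [show Pa ++ [w] ++ (Pb ++ Q) = (Pa ++ w :: Pb) ++ Q by simp, ← hPab, ← hrPC]
    exact hih

/-- The RIGHT surgical trail: from `z` back up the descent to the cut vertex `w'`,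
then along `r` to `b`. -/
theorem rightLemma {E : V → V → Prop} {L S : Set V} {x y : V}
    {r P Q D : List V} {b c z : V}
    (htr : IsTrail E r) (hlast : r.getLast? = some b)
    (hrPQ : r = P ++ c :: Q)
    (hmid : ∀ u w p, [u, w, p] <:+: r → w ∈ L ∪ S)
    (hcoll : ∀ u w p, [u, w, p] <:+: r → ColliderTriple E u w p →
      AncSet E ({x, y} ∪ S) w)
    (hnc : ∀ u w p, [u, w, p] <:+: r → ¬ ColliderTriple E u w p → w ∈ L)
    (hDch : D.Chain' E) (hDhd : D.head? = some c) (hDlast : D.getLast? = some z)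
    (hDnd : D.Nodup) (hcL : c ∈ L)
    (hDL : ∀ u ∈ D, u ≠ c → u ≠ z → u ∈ L)
    (hzT : AncSet E ({x, y} ∪ S) z)
    (hbD : b ∉ D)
    (hzr : z ∉ r) :
    ∃ rgt, IsTrail E rgt ∧ rgt.head? = some z ∧ rgt.getLast? = some b ∧
      (∀ u w p, [u, w, p] <:+: rgt → w ∈ L ∪ S) ∧
      (∀ u w p, [u, w, p] <:+: rgt → ColliderTriple E u w p →
        AncSet E ({x, y} ∪ S) w) ∧
      (∀ u w p, [u, w, p] <:+: rgt → ¬ ColliderTriple E u w p → w ∈ L) ∧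
      (∀ u w p, [u, w, p] <:+: rgt → ColliderTriple E u w p →
        ¬ AncSet E ({z} ∪ S) w → ∃ s t, rgt = s ++ w :: t ∧ t.length < Q.length) ∧
      IntoHead E rgt ∧ (IntoLast E r → IntoLast E rgt) := by
  have hcD : c ∈ D := head?_mem hDhd
  have hcQsuf : (c :: Q) <:+ r := ⟨P, hrPQ.symm⟩
  have hcQnd : (c :: Q).Nodup := hcQsuf.sublist.nodup htr.2
  have hcQch : (c :: Q).Chain' (Adjacent E) := htr.1.infix hcQsuf.isInfix
  obtain ⟨G₁, w', G₂, hDsplit, hw'Q, hG₂clean⟩ :=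
    lastHit (· ∈ c :: Q) D ⟨c, hcD, by simp⟩
  have hw'D : w' ∈ D := by rw [hDsplit]; simp
  have hG₂ne : G₂ ≠ [] := by
    rintro rfl
    have hzw : D.getLast? = some w' := by rw [hDsplit]; exact getLast?_append_right rfl
    rw [hDlast] at hzw
    injection hzw with hzw
    exact hzr (hrPQ ▸ mem_append.mpr (Or.inr (hzw ▸ hw'Q)))
  have hG₂last : G₂.getLast? = some z := by
    have hgl : D.getLast? = G₂.getLast? := by
      rw [hDsplit, show G₁ ++ w' :: G₂ = (G₁ ++ [w']) ++ G₂ by simp, getLast?_append]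
      cases G₂ with
      | nil => exact absurd rfl hG₂ne
      | cons d0 G₂' =>
        obtain ⟨q, hq⟩ : ∃ q, (d0 :: G₂').getLast? = some q :=
          ⟨_, getLast?_eq_getLast (by simp)⟩
        rw [hq]; rfl
    rw [← hgl, hDlast]
  obtain ⟨Qa, Qb, hQab⟩ := List.append_of_mem hw'Q
  have hcQlast : (c :: Q).getLast? = some b := by
    obtain ⟨q, hq⟩ : ∃ q, (c :: Q).getLast? = some q :=
      ⟨_, getLast?_eq_getLast (by simp)⟩
    have : r.getLast? = some q := by
      rw [hrPQ, show P ++ c :: Q = P ++ (c :: Q) from rfl]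
      exact getLast?_append_right hq
    rw [hlast] at this
    injection this with this
    rw [hq, this]
  have hQbne : Qb ≠ [] := by
    rintro rfl
    have hgb : (c :: Q).getLast? = some w' := by rw [hQab]; exact getLast?_append_right rfl
    rw [hcQlast] at hgb
    injection hgb with hgb
    exact hbD (hgb ▸ hw'D)
  have hQblast : Qb.getLast? = some b := by
    have h1 : (c :: Q).getLast? = Qb.getLast? := by
      rw [hQab, show Qa ++ w' :: Qb = (Qa ++ [w']) ++ Qb by simp, getLast?_append]
      cases Qb with
      | nil => exact absurd rfl hQbne
      | cons q0 Qb' =>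
        obtain ⟨q, hq⟩ : ∃ q, (q0 :: Qb').getLast? = some q :=
          ⟨_, getLast?_eq_getLast (by simp)⟩
        rw [hq]; rfl
    rw [← h1, hcQlast]
  have hw'Qbsuf : (w' :: Qb) <:+ (c :: Q) := ⟨Qa, hQab.symm⟩
  have hw'QbInfr : (w' :: Qb) <:+: r := (hw'Qbsuf.trans hcQsuf).isInfix
  have hw'Qbnd : (w' :: Qb).Nodup := hw'Qbsuf.sublist.nodup hcQnd
  have hw'G₂suf : (w' :: G₂) <:+ D := by rw [hDsplit]; exact ⟨G₁, rfl⟩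
  have hw'G₂ch : (w' :: G₂).Chain' E := hDch.infix hw'G₂suf.isInfix
  have hw'G₂nd : (w' :: G₂).Nodup := hw'G₂suf.sublist.nodup hDnd
  have hw'G₂last : (w' :: G₂).getLast? = some z := by
    cases G₂ with
    | nil => exact absurd rfl hG₂ne
    | cons d0 G₂' => rw [getLast?_cons_cons]; exact hG₂last
  have hGrevhd : G₂.reverse.head? = some z := by rw [head?_reverse]; exact hG₂last
  have hDanc : ∀ u ∈ D, Anc E u z := fun u hu => anc_of_chain_mem hDch hu hDlast
  have hw'ne_z : w' ≠ z := by
    intro h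
    exact hzr (hrPQ ▸ mem_append.mpr (Or.inr (h ▸ hw'Q)))
  have hw'L : w' ∈ L := by
    by_cases hwc : w' = c
    · exact hwc ▸ hcL
    · exact hDL w' hw'D hwc hw'ne_z
  set rgt := G₂.reverse ++ w' :: Qb with hrgtdef
  have hrgtNd : rgt.Nodup := by
    rw [hrgtdef, nodup_append]
    refine ⟨by simpa using hw'G₂nd.sublist (by simp), hw'Qbnd, ?_⟩
    intro v hv v2 hv2 hvv
    subst hvv
    have hvG₂ : v ∈ G₂ := by simpa using hv
    exact hG₂clean v hvG₂ (hw'Qbsuf.subset hv2)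
  have hrgtCh : rgt.Chain' (Adjacent E) := by
    rw [hrgtdef]
    show List.IsChain _ _
    rw [List.isChain_append]
    refine ⟨chain'_adj_reverse (chain'_adj (hw'G₂ch.tail)), hcQch.infix hw'Qbsuf.isInfix, ?_⟩
    intro p1 hp1 q1 hq1
    simp only [head?_cons, Option.mem_def, Option.some_inj] at hq1
    subst hq1
    rw [getLast?_reverse] at hp1
    cases G₂ with
    | nil => exact absurd rfl hG₂ne
    | cons d0 G₂' =>
      simp only [head?_cons, Option.mem_def, Option.some_inj] at hp1
      subst hp1
      exact Or.inr (List.isChain_cons_cons.mp hw'G₂ch).1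
  have hrgtHd : rgt.head? = some z := by
    rw [hrgtdef]
    apply head?_append_left hGrevhd
  have hrgtLast : rgt.getLast? = some b := by
    rw [hrgtdef, show G₂.reverse ++ w' :: Qb = (G₂.reverse ++ [w']) ++ Qb by simp]
    exact getLast?_append_right hQblast
  have hrev_eq : G₂.reverse ++ [w'] = (w' :: G₂).reverse := by simp
  have hrevnd : (G₂.reverse ++ [w']).Nodup := by rw [hrev_eq, nodup_reverse]; exact hw'G₂nd
  -- classify centers in the reversed-descent part
  have hDside : ∀ u w1 p1, [u, w1, p1] <:+: G₂.reverse ++ [w'] →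
      w1 ∈ D ∧ w1 ∈ L ∧ Anc E w1 z := by
    intro u w1 p1 h1
    have hw1mem : w1 ∈ G₂.reverse ++ [w'] := triple_center_mem h1
    have hne_w' : w1 ≠ w' := triple_center_ne_last hrevnd (getLast?_concat) h1
    have hne_z2 : w1 ≠ z :=
      triple_center_ne_head hrevnd (head?_append_left hGrevhd) h1
    have hw1G₂ : w1 ∈ G₂ := by
      rcases mem_append.mp hw1mem with h | h
      · simpa using h
      · simp at h; exact absurd h hne_w'
    have hw1D : w1 ∈ D := hw'G₂suf.subset (by simp [hw1G₂])
    have hne_c : w1 ≠ c := by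
      intro h; exact hG₂clean w1 hw1G₂ (h ▸ (by simp : c ∈ c :: Q))
    exact ⟨hw1D, hDL w1 hw1D hne_c hne_z2, hDanc w1 hw1D⟩
  refine ⟨rgt, ⟨hrgtCh, hrgtNd⟩, hrgtHd, hrgtLast, ?_, ?_, ?_, ?_, ?_, ?_⟩
  · -- midLS
    intro u w1 p1 hinf
    rcases infix_triple_append (A := G₂.reverse) (j := w') (B := Qb) hinf with h1 | h2 | h3
    · exact Or.inl (hDside u w1 p1 h1).2.1
    · exact hmid u w1 p1 (h2.trans hw'QbInfr)
    · obtain ⟨rfl, _, _⟩ := h3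
      exact Or.inl hw'L
  · -- colliders are ancestors of T
    intro u w1 p1 hinf hc
    rcases infix_triple_append (A := G₂.reverse) (j := w') (B := Qb) hinf with h1 | h2 | h3
    · exact ancSet_of_anc (hDside u w1 p1 h1).2.2 hzT
    · exact hcoll u w1 p1 (h2.trans hw'QbInfr) hc
    · rw [h3.1]
      exact ancSet_of_anc (hDanc _ hw'D) hzT
  · -- non-colliders in L
    intro u w1 p1 hinf hncoll
    rcases infix_triple_append (A := G₂.reverse) (j := w') (B := Qb) hinf with h1 | h2 | h3
    · exact (hDside u w1 p1 h1).2.1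
    · exact hnc u w1 p1 (h2.trans hw'QbInfr) hncoll
    · obtain ⟨rfl, _, _⟩ := h3
      exact hw'L
  · -- needy colliders live in a short suffix
    intro u w1 p1 hinf hc hneedy
    rcases infix_triple_append (A := G₂.reverse) (j := w') (B := Qb) hinf with h1 | h2 | h3
    · exact absurd ⟨z, Or.inl rfl, (hDside u w1 p1 h1).2.2⟩ hneedy
    · have hw1Qb : w1 ∈ Qb := triple_center_mem_tail h2
      obtain ⟨γ, δ, hγδ⟩ := List.append_of_mem hw1Qb
      refine ⟨G₂.reverse ++ w' :: γ, δ, by rw [hrgtdef, hγδ]; simp, ?_⟩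
      have hlen1 : Qb.length ≤ Q.length := by
        have := congrArg List.length hQab
        simp only [length_cons, length_append] at this
        omega
      have hlen2 : δ.length < Qb.length := by
        rw [hγδ]; simp only [length_append, length_cons]; omega
      omega
    · rw [h3.1] at hneedy
      exact absurd ⟨z, Or.inl rfl, hDanc _ hw'D⟩ hneedy
  · -- IntoHead rgt
    obtain ⟨ζ, ρ, hζ⟩ := exists_concat_pair hw'G₂last (by
      cases G₂ with
      | nil => exact absurd rfl hG₂ne
      | cons d0 G₂' => simp)
    have hE : E ρ z := edge_of_infix hw'G₂ch ⟨ζ, [], by rw [hζ]; simp⟩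
    refine ⟨z, ρ, ζ.reverse ++ Qb, ?_, hE⟩
    rw [hrgtdef, show G₂.reverse ++ w' :: Qb = (G₂.reverse ++ [w']) ++ Qb by simp,
      hrev_eq, hζ]
    simp
  · -- IntoLast transfer
    intro hil
    have h2 : 2 ≤ (w' :: Qb).length := by
      cases Qb with
      | nil => exact absurd rfl hQbne
      | cons q0 Qb' => simp
    have := (intoLast_append_iff (E := E) h2 (P ++ Qa) G₂.reverse).mp
    rw [← hrgtdef] at this
    apply this
    rw [show (P ++ Qa) ++ (w' :: Qb) = P ++ (Qa ++ w' :: Qb) by simp, ← hQab, ← hrPQ]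
    exact hil

theorem keyBase {E : V → V → Prop} {O L S : Set V} {x y : V} {r : List V} {a b : V}
    (htr : IsTrail E r) (hhd : r.head? = some a) (hlast : r.getLast? = some b)
    (haO : a ∈ O) (haT : AncSet E ({x, y} ∪ S) a)
    (hbO : b ∈ O) (hbT : AncSet E ({x, y} ∪ S) b)
    (hnc : ∀ u w p, [u, w, p] <:+: r → ¬ ColliderTriple E u w p → w ∈ L)
    (hgood : ∀ u w p, [u, w, p] <:+: r → ColliderTriple E u w p →
      AncSet E ({a} ∪ S) w) :
    ∃ cs, cs.head? = some a ∧ cs.getLast? = some b ∧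
      (∀ w ∈ cs, w ∈ O ∧ AncSet E ({x, y} ∪ S) w) ∧
      GC E L S (IntoHead E r) (IntoLast E r) cs := by
  refine ⟨[a, b], rfl, rfl, ?_, ?_⟩
  · intro w hw
    rcases mem_cons.mp hw with rfl | hw2
    · exact ⟨haO, haT⟩
    · simp only [mem_cons, not_mem_nil, or_false, mem_singleton] at hw2
      subst hw2; exact ⟨hbO, hbT⟩
  · refine gc_cons₂.mpr ⟨⟨r, ⟨htr, hhd, hlast, ?_, hnc⟩, fun h => h, ?_⟩, gc_single⟩
    · intro u w p hinf hc
      exact ancSet_mono (singleton_union_subset_pair a b) (hgood u w p hinf hc)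
    · rintro (h | h)
      · simp at h
      · exact h

theorem keyAux {E : V → V → Prop} {O L S : Set V} {x y : V}
    (hcover : ∀ v : V, v ∈ O ∨ v ∈ L ∨ v ∈ S)
    (hOL : Disjoint O L) (hOS : Disjoint O S) (hLS : Disjoint L S)
    (hx : x ∈ O) (hy : y ∈ O) :
    ∀ (n : ℕ) (r : List V) (a b : V),
      IsTrail E r → r.head? = some a → r.getLast? = some b → a ≠ b →
      a ∈ O → AncSet E ({x, y} ∪ S) a → b ∈ O → AncSet E ({x, y} ∪ S) b →
      (∀ u w p, [u, w, p] <:+: r → w ∈ L ∪ S) →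
      (∀ u w p, [u, w, p] <:+: r → ColliderTriple E u w p → AncSet E ({x, y} ∪ S) w) →
      (∀ u w p, [u, w, p] <:+: r → ¬ ColliderTriple E u w p → w ∈ L) →
      (∀ u w p, [u, w, p] <:+: r → ColliderTriple E u w p → ¬ AncSet E ({a} ∪ S) w →
        ∃ s t, r = s ++ w :: t ∧ t.length < n) →
      ∃ cs, cs.head? = some a ∧ cs.getLast? = some b ∧
        (∀ w ∈ cs, w ∈ O ∧ AncSet E ({x, y} ∪ S) w) ∧
        GC E L S (IntoHead E r) (IntoLast E r) cs := by
  intro n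
  induction n with
  | zero =>
    intro r a b htr hhd hlast hab haO haT hbO hbT hmid hcoll hnc hNB
    refine keyBase htr hhd hlast haO haT hbO hbT hnc ?_
    intro u w p hinf hc
    by_contra hbad
    obtain ⟨s, t, _, hlt⟩ := hNB u w p hinf hc hbad
    omega
  | succ n ih =>
    intro r a b htr hhd hlast hab haO haT hbO hbT hmid hcoll hnc hNB
    by_cases hgood : ∀ u w p, [u, w, p] <:+: r → ColliderTriple E u w p →
        AncSet E ({a} ∪ S) w
    · exact keyBase htr hhd hlast haO haT hbO hbT hnc hgood
    push_neg at hgood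
    obtain ⟨u₀, c₀, p₀, htrip0, hcoll0, hbad0⟩ := hgood
    obtain ⟨P, cbad, Q, hrPQ, ⟨⟨u₁, p₁, htrip1, hcoll1⟩, hbad⟩, hPclean⟩ :=
      firstHit (fun w => (∃ u p, [u, w, p] <:+: r ∧ ColliderTriple E u w p) ∧
        ¬ AncSet E ({a} ∪ S) w) r ⟨c₀, triple_center_mem htrip0, ⟨u₀, p₀, htrip0, hcoll0⟩, hbad0⟩
    have htrip1' := htrip1
    obtain ⟨s₀, t₀, hdec⟩ := htrip1'
    have hdec2 : r = (s₀ ++ [u₁]) ++ cbad :: (p₁ :: t₀) := by rw [← hdec]; simp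
    have huniq := nodup_split_unique (by rw [← hrPQ]; exact htr.2) (hrPQ.symm.trans hdec2)
    have hPne : P ≠ [] := by rw [huniq.1]; simp
    have hQne : Q ≠ [] := by rw [huniq.2]; simp
    have hcbadL : cbad ∈ L := by
      rcases hmid _ _ _ htrip1 with h | h
      · exact h
      · exact absurd (ancSet_of_mem (T := {a} ∪ S) (Or.inr h)) hbad
    have hcbadT : AncSet E ({x, y} ∪ S) cbad := hcoll _ _ _ htrip1 hcoll1
    have hPgood : ∀ w ∈ P, ∀ u p, [u, w, p] <:+: r → ColliderTriple E u w p →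
        AncSet E ({a} ∪ S) w := by
      intro w hw u p htw hcw
      by_contra hbw
      exact hPclean w hw ⟨⟨u, p, htw, hcw⟩, hbw⟩
    set STOP : Set V := S ∪ {v | v ∈ O ∧ AncSet E ({x, y} ∪ S) v} with hSTOP
    have hTstop : ∀ v, v ∈ ({x, y} : Set V) ∪ S → v ∈ STOP := by
      rintro v (hv | hv)
      · rcases hv with rfl | hv
        · exact Or.inr ⟨hx, ancSet_of_mem (Or.inl (Or.inl rfl))⟩
        · rw [Set.mem_singleton_iff] at hv
          subst hv
          exact Or.inr ⟨hy, ancSet_of_mem (Or.inl (Or.inr rfl))⟩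
      · exact Or.inl hv
    obtain ⟨tgt, htgtT, hanc⟩ := hcbadT
    obtain ⟨l₀, hch₀, hhd₀, hlast₀⟩ := anc_to_chain hanc
    obtain ⟨D, z, hDch, hDhd, hzSTOP, hDlast, hDnd, hDclean⟩ :=
      exists_min_dirlist (E := E) (STOP := STOP)
        ⟨l₀, hch₀, hhd₀, tgt, hTstop tgt htgtT, hlast₀⟩
    have hAncz : Anc E cbad z := anc_of_chain_mem hDch (head?_mem hDhd) hDlast
    have hzS : z ∉ S := fun h => hbad ⟨z, Or.inr h, hAncz⟩
    have hzO : z ∈ O ∧ AncSet E ({x, y} ∪ S) z := by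
      rcases hzSTOP with h | h
      · exact absurd h hzS
      · exact h
    have hDL : ∀ u ∈ D, u ≠ cbad → u ≠ z → u ∈ L := by
      intro u hu huc huz
      have hmem : u ∈ D.dropLast := mem_dropLast_of_ne_last hDlast hu huz
      have hustop : u ∉ STOP := hDclean u hmem
      have huT : AncSet E ({x, y} ∪ S) u :=
        ancSet_of_anc (anc_of_chain_mem hDch hu hDlast) hzO.2
      rcases hcover u with h | h | h
      · exact absurd (Or.inr ⟨h, huT⟩) hustop
      · exact h
      · exact absurd (Or.inl h) hustop
    have hnotD : ∀ v, v ∈ STOP → v ≠ z → v ∉ D := by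
      intro v hv hvz hvD
      exact hDclean v (mem_dropLast_of_ne_last hDlast hvD hvz) hv
    have haSTOP : a ∈ STOP := Or.inr ⟨haO, haT⟩
    have hbSTOP : b ∈ STOP := Or.inr ⟨hbO, hbT⟩
    have hQlast : Q.getLast? = some b := by
      obtain ⟨q, hq⟩ : ∃ q, Q.getLast? = some q := ⟨_, getLast?_eq_getLast hQne⟩
      have h2 : r.getLast? = some q := by
        rw [hrPQ, show P ++ cbad :: Q = (P ++ [cbad]) ++ Q by simp]
        exact getLast?_append_right hq
      rw [hlast] at h2
      injection h2 with h2
      rw [hq, h2]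
    have hbQ : b ∈ Q := getLast?_mem hQlast
    have hbPC : b ∉ P ++ [cbad] := by
      have hnd := htr.2
      rw [hrPQ, show P ++ cbad :: Q = (P ++ [cbad]) ++ Q by simp, nodup_append] at hnd
      exact fun h => hnd.2.2 b h b hbQ rfl
    by_cases hza : z = a
    · exact absurd ⟨a, Or.inl rfl, hza ▸ hAncz⟩ hbad
    have haD : a ∉ D := hnotD a haSTOP (fun h => hza h.symm)
    by_cases hzr : z ∈ r
    · by_cases hzb : z = b
      · -- FINISH: the left trail alone is an inducing path from a to b
        obtain ⟨lft, hlftI, hlftIL, hlftIH⟩ := leftLemma (O := O) htr hhd hlast hrPQ hPne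
          hPgood hnc hDch hDhd hDlast hDnd hcbadL hDL haD (by rw [hzb]; exact hbPC)
        refine ⟨[a, b], rfl, rfl, ?_, ?_⟩
        · intro w hw
          rcases mem_cons.mp hw with rfl | hw2
          · exact ⟨haO, haT⟩
          · simp only [mem_cons, not_mem_nil, or_false, mem_singleton] at hw2
            subst hw2; exact ⟨hbO, hbT⟩
        · refine gc_cons₂.mpr ⟨⟨lft, hzb ▸ hlftI, hlftIH, fun _ => hlftIL⟩, gc_single⟩
      · -- z would be an interior vertex of r in O: impossible
        obtain ⟨u2, w2, htrip2⟩ := mem_interior_triple hhd hlast hzr hza hzb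
        rcases hmid _ _ _ htrip2 with h | h
        · exact absurd h (Set.disjoint_left.mp hOL hzO.1)
        · exact absurd h hzS
    · -- MAIN branch
      have hzb : z ≠ b := fun h => hzr (h ▸ getLast?_mem hlast)
      have hbD : b ∉ D := hnotD b hbSTOP (fun h => hzb h.symm)
      have hzPC : z ∉ P ++ [cbad] := by
        intro h
        apply hzr
        rw [hrPQ]
        rcases mem_append.mp h with h2 | h2
        · exact mem_append.mpr (Or.inl h2)
        · simp only [mem_singleton] at h2
          subst h2
          simp
      obtain ⟨lft, hlftI, hlftIL, hlftIH⟩ := leftLemma (O := O) htr hhd hlast hrPQ hPne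
        hPgood hnc hDch hDhd hDlast hDnd hcbadL hDL haD hzPC
      obtain ⟨rgt, hrt, hrh, hrl, hrmid, hrcoll, hrnc, hrNB, hrIH, hrILtr⟩ :=
        rightLemma htr hlast hrPQ hmid hcoll hnc hDch hDhd hDlast hDnd hcbadL hDL
          hzO.2 hbD hzr
      obtain ⟨s₂, t₂, heq₂, hlt₂⟩ := hNB u₁ cbad p₁ htrip1 hcoll1 hbad
      have hQn : Q.length ≤ n := by
        have huq := nodup_split_unique (by rw [← hrPQ]; exact htr.2) (hrPQ.symm.trans heq₂)
        rw [huq.2]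
        omega
      have hrNB' : ∀ u w p, [u, w, p] <:+: rgt → ColliderTriple E u w p →
          ¬ AncSet E ({z} ∪ S) w → ∃ s t, rgt = s ++ w :: t ∧ t.length < n := by
        intro u w p h1 h2 h3
        obtain ⟨s, t, hst, hlt⟩ := hrNB u w p h1 h2 h3
        exact ⟨s, t, hst, by omega⟩
      obtain ⟨cs₂, hcs₂h, hcs₂l, hcs₂e, hcs₂gc⟩ :=
        ih rgt z b hrt hrh hrl hzb hzO.1 hzO.2 hbO hbT hrmid hrcoll hrnc hrNB'
      obtain ⟨cs₂', rfl⟩ : ∃ t, cs₂ = z :: t := by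
        cases cs₂ with
        | nil => simp at hcs₂h
        | cons h t =>
          simp only [head?_cons, Option.some_inj] at hcs₂h
          subst hcs₂h
          exact ⟨t, rfl⟩
      have hte : cs₂' ≠ [] := by
        rintro rfl
        exact hzb (by simpa using hcs₂l)
      refine ⟨a :: z :: cs₂', rfl, ?_, ?_, ?_⟩
      · rw [getLast?_cons_cons]
        exact hcs₂l
      · intro w hw
        rcases mem_cons.mp hw with rfl | hw2
        · exact ⟨haO, haT⟩
        · exact hcs₂e w hw2
      · refine gc_cons₂.mpr ⟨⟨lft, hlftI, hlftIH, fun _ => hlftIL⟩, ?_⟩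
        exact gc_mono _ (IntoHead E rgt) (IntoLast E rgt) True (IntoLast E r) hcs₂gc
          (fun _ => hrIH) hrILtr

theorem trivialNB {α : Type*} {l : List α} {u w p : α} (h : [u, w, p] <:+: l) :
    ∃ s t, l = s ++ w :: t ∧ t.length < l.length := by
  obtain ⟨s, t, heq⟩ := h
  refine ⟨s ++ [u], p :: t, by rw [← heq]; simp, ?_⟩
  rw [← heq]
  simp only [length_append, length_cons]
  omega

theorem assemble {E : V → V → Prop} {O L S : Set V} {x y : V}
    (hcover : ∀ v : V, v ∈ O ∨ v ∈ L ∨ v ∈ S)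
    (hOL : Disjoint O L) (hOS : Disjoint O S) (hLS : Disjoint L S)
    (hx : x ∈ O) (hy : y ∈ O) :
    ∀ (m : ℕ) (q : List V) (e v : V), q.length ≤ m → IsTrail E q → q.head? = some e →
      q.getLast? = some v → e ∈ O → AncSet E ({x, y} ∪ S) e → v ∈ O →
      AncSet E ({x, y} ∪ S) v →
      (∀ u w p, [u, w, p] <:+: q → ¬ ColliderTriple E u w p →
        (w ∈ L ∧ w ∉ O)) →
      (∀ u w p, [u, w, p] <:+: q → ColliderTriple E u w p → AncSet E ({x, y} ∪ S) w) →
      ∃ cs, cs.head? = some e ∧ cs.getLast? = some v ∧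
        (∀ w ∈ cs, w ∈ O ∧ AncSet E ({x, y} ∪ S) w) ∧
        GC E L S (IntoHead E q) (IntoLast E q) cs := by
  intro m
  induction m with
  | zero =>
    intro q e v hlen _ hhd _ _ _ _ _ _ _
    cases q with
    | nil => simp at hhd
    | cons h t => simp at hlen
  | succ m ihm =>
    intro q e v hlen htr hhd hlast heO heT hvO hvT hnc hcoll
    by_cases hshort : q.length ≤ 1
    · cases q with
      | nil => simp at hhd
      | cons h t =>
        cases t with
        | cons h2 t2 => simp at hshort
        | nil =>
          simp only [head?_cons, Option.some_inj] at hhd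
          have hv2 : h = v := by simpa using hlast
          have hev : e = v := hhd.symm.trans hv2
          refine ⟨[e], rfl, congrArg some hev, ?_, gc_single⟩
          intro w hw
          simp only [mem_singleton] at hw
          subst hw
          exact ⟨heO, heT⟩
    push_neg at hshort
    have hev : e ≠ v := head_ne_last_of_nodup htr.2 hhd hlast (by omega)
    by_cases hOint : ∃ w1, (∃ u p, [u, w1, p] <:+: q) ∧ w1 ∈ O
    · obtain ⟨w0, ⟨⟨g0, g0', htrip0⟩, hw0O⟩⟩ := hOint
      obtain ⟨α, u₁, β, hqαβ, ⟨⟨g, g', htrip⟩, hu₁O⟩, hclean⟩ :=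
        firstHit (fun w1 => (∃ u p, [u, w1, p] <:+: q) ∧ w1 ∈ O) q
          ⟨w0, triple_center_mem htrip0, ⟨g0, g0', htrip0⟩, hw0O⟩
      have hcol1 : ColliderTriple E g u₁ g' := by
        by_contra hnc1
        exact (hnc g u₁ g' htrip hnc1).2 hu₁O
      have htrip' := htrip
      obtain ⟨s₀, t₀, hdec⟩ := htrip'
      have hdec2 : q = (s₀ ++ [g]) ++ u₁ :: (g' :: t₀) := by rw [← hdec]; simp
      have huniq := nodup_split_unique (by rw [← hqαβ]; exact htr.2) (hqαβ.symm.trans hdec2)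
      have hαne : α ≠ [] := by rw [huniq.1]; simp
      have hβne : β ≠ [] := by rw [huniq.2]; simp
      have hlqpre : (α ++ [u₁]) <+: q := ⟨β, by rw [hqαβ]; simp⟩
      have hlqtr : IsTrail E (α ++ [u₁]) :=
        ⟨htr.1.prefix hlqpre, hlqpre.sublist.nodup htr.2⟩
      have hαhd : α.head? = some e :=
        head?_of_append_eq (X := u₁ :: β) hαne (by rw [← hqαβ]; exact hhd)
      have hlqhd : (α ++ [u₁]).head? = some e := head?_append_left hαhd
      have hlqlast : (α ++ [u₁]).getLast? = some u₁ := getLast?_concat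
      have heu₁ : u₁ ≠ e := triple_center_ne_head htr.2 hhd htrip
      have hlqinf : ∀ (l1 : List V), l1 <:+: (α ++ [u₁]) → l1 <:+: q :=
        fun l1 h1 => h1.trans hlqpre.isInfix
      have hu₁T : AncSet E ({x, y} ∪ S) u₁ := hcoll g u₁ g' htrip hcol1
      have hlqnd : (α ++ [u₁]).Nodup := hlqpre.sublist.nodup htr.2
      have hmidlq : ∀ u w p, [u, w, p] <:+: (α ++ [u₁]) → w ∈ L ∪ S := by
        intro u w p hinf
        have hinq : [u, w, p] <:+: q := hlqinf _ hinf
        have hwα : w ∈ α := by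
          have hm : w ∈ α ++ [u₁] := triple_center_mem hinf
          have hne : w ≠ u₁ := triple_center_ne_last hlqnd (getLast?_concat) hinf
          rcases mem_append.mp hm with h | h
          · exact h
          · simp at h; exact absurd h hne
        have hwO : w ∉ O := fun hO =>
          hclean w hwα ⟨⟨u, p, hinq⟩, hO⟩
        rcases hcover w with h | h | h
        · exact absurd h hwO
        · exact Or.inl h
        · exact Or.inr h
      obtain ⟨cs₁, hcs₁h, hcs₁l, hcs₁e, hcs₁gc⟩ := keyAux hcover hOL hOS hLS hx hy
        (α ++ [u₁]).length (α ++ [u₁]) e u₁ hlqtr hlqhd hlqlast (fun h => heu₁ h.symm)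
        heO heT hu₁O hu₁T hmidlq
        (fun u w p hinf hc => hcoll u w p (hlqinf _ hinf) hc)
        (fun u w p hinf hc2 => (hnc u w p (hlqinf _ hinf) hc2).1)
        (fun u w p hinf _ _ => trivialNB hinf)
      have hrqsuf : (u₁ :: β) <:+ q := ⟨α, hqαβ.symm⟩
      have hrqtr : IsTrail E (u₁ :: β) :=
        ⟨htr.1.infix hrqsuf.isInfix, hrqsuf.sublist.nodup htr.2⟩
      have hrqlast : (u₁ :: β).getLast? = some v := by
        obtain ⟨q2, hq2⟩ : ∃ q2, (u₁ :: β).getLast? = some q2 :=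
          ⟨_, getLast?_eq_getLast (by simp)⟩
        have h2 : q.getLast? = some q2 := by
          rw [hqαβ, show α ++ u₁ :: β = α ++ (u₁ :: β) from rfl]
          exact getLast?_append_right hq2
        rw [hlast] at h2
        injection h2 with h2
        rw [hq2, h2]
      have hrqinf : ∀ (l1 : List V), l1 <:+: (u₁ :: β) → l1 <:+: q :=
        fun l1 h1 => h1.trans hrqsuf.isInfix
      have hrqlen : (u₁ :: β).length ≤ m := by
        have hq := congrArg List.length hqαβ
        simp only [length_append, length_cons] at hq ⊢
        cases α with
        | nil => exact absurd rfl hαne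
        | cons a0 α' =>
          simp only [length_cons] at hq
          omega
      obtain ⟨cs₂, hcs₂h, hcs₂l, hcs₂e, hcs₂gc⟩ := ihm (u₁ :: β) u₁ v hrqlen hrqtr rfl
        hrqlast hu₁O hu₁T hvO hvT
        (fun u w p hinf hc2 => hnc u w p (hrqinf _ hinf) hc2)
        (fun u w p hinf hc => hcoll u w p (hrqinf _ hinf) hc)
      obtain ⟨A, hAeq⟩ := getLast?_eq_some_split hcs₁l
      obtain ⟨B, hBeq⟩ : ∃ B, cs₂ = u₁ :: B := by
        cases cs₂ with
        | nil => simp at hcs₂h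
        | cons h0 t0 =>
          simp only [head?_cons, Option.some_inj] at hcs₂h
          subst hcs₂h
          exact ⟨t0, rfl⟩
      have hu₁v : u₁ ≠ v := triple_center_ne_last htr.2 hlast htrip
      have hBne : B ≠ [] := by
        rintro rfl
        rw [hBeq] at hcs₂l
        exact hu₁v (by simpa using hcs₂l)
      have hgc1 : GC E L S (IntoHead E q) True (A ++ [u₁]) := by
        rw [← hAeq]
        apply gc_mono _ (IntoHead E (α ++ [u₁])) (IntoLast E (α ++ [u₁])) _ _ hcs₁gc
        · intro hih
          have h2 : 2 ≤ (α ++ [u₁]).length := by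
            cases α with
            | nil => exact absurd rfl hαne
            | cons a0 α' => simp
          have := (intoHead_append_iff (E := E) h2 β []).mp
          simp only [append_nil] at this
          apply this
          rw [show α ++ [u₁] ++ β = α ++ u₁ :: β by simp, ← hqαβ]
          exact hih
        · intro _
          rw [show α ++ [u₁] = s₀ ++ [g, u₁] by rw [huniq.1]; simp]
          exact intoLast_iff.mpr hcol1.1
      have hgc2 : GC E L S True (IntoLast E q) (u₁ :: B) := by
        rw [← hBeq]
        apply gc_mono _ (IntoHead E (u₁ :: β)) (IntoLast E (u₁ :: β)) _ _ hcs₂gc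
        · intro _
          rw [show u₁ :: β = u₁ :: g' :: t₀ by rw [huniq.2]]
          exact intoHead_iff.mpr hcol1.2
        · intro hil
          have h2 : 2 ≤ (u₁ :: β).length := by
            cases β with
            | nil => exact absurd rfl hβne
            | cons b0 β' => simp
          have := (intoLast_append_iff (E := E) h2 α []).mp
          simp only [nil_append] at this
          apply this
          rw [← hqαβ]
          exact hil
      refine ⟨A ++ u₁ :: B, ?_, ?_, ?_, gc_append A _ _ u₁ B hgc1 hgc2 hBne⟩
      · have h1 : (A ++ [u₁]).head? = some e := hAeq ▸ hcs₁h
        rw [head?_append] at h1 ⊢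
        simpa using h1
      · rw [show A ++ u₁ :: B = A ++ (u₁ :: B) from rfl]
        apply getLast?_append_right
        rw [← hBeq]
        exact hcs₂l
      · intro w hw
        rcases mem_append.mp hw with h | h
        · exact hcs₁e w (by rw [hAeq]; exact mem_append.mpr (Or.inl h))
        · exact hcs₂e w (by rw [hBeq]; exact h)
    · -- no interior O-vertex at all: q is already a segment
      push_neg at hOint
      refine keyAux hcover hOL hOS hLS hx hy q.length q e v htr hhd hlast hev heO heT
        hvO hvT ?_ hcoll (fun u w p hinf hc2 => (hnc u w p hinf hc2).1)
        (fun u w p hinf _ _ => trivialNB hinf)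
      intro u w p hinf
      have hwO : w ∉ O := fun hO => hOint w ⟨u, p, hinf⟩ hO
      rcases hcover w with h | h | h
      · exact absurd h hwO
      · exact Or.inl h
      · exact Or.inr h

theorem mainDSep {E : V → V → Prop} {O L S : Set V}
    (hcover : ∀ v : V, v ∈ O ∨ v ∈ L ∨ v ∈ S)
    (hOL : Disjoint O L) (hOS : Disjoint O S) (hLS : Disjoint L S)
    {x y : V} (hx : x ∈ O) (hy : y ∈ O)
    (hip : ¬ HasInducingPath E L S x y) :
    DSep E ({k | InDSEP E O L S x y k} ∪ S) x y := by
  intro hcon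
  obtain ⟨p, htr, hhd, hlast, hcolP, hnonP⟩ := hcon
  have hCT : ∀ d ∈ ({k | InDSEP E O L S x y k} ∪ S : Set V),
      AncSet E ({x, y} ∪ S) d := by
    rintro d (hd | hdS)
    · obtain ⟨σ, hσh, hσl, hσnd, hall, hchain, htrip⟩ := hd
      exact (hall d (getLast?_mem hσl)).2
    · exact ancSet_of_mem (Or.inr hdS)
  have hcolT : ∀ u w p', [u, w, p'] <:+: p → ColliderTriple E u w p' →
      AncSet E ({x, y} ∪ S) w := by
    intro u w p' h1 h2
    obtain ⟨d, hdC, hanc⟩ := hcolP u w p' h1 h2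
    exact ancSet_of_anc hanc (hCT d hdC)
  have hxT : AncSet E ({x, y} ∪ S) x := ancSet_of_mem (Or.inl (Or.inl rfl))
  have hyT : AncSet E ({x, y} ∪ S) y := ancSet_of_mem (Or.inl (Or.inr rfl))
  have hallT : ∀ v ∈ p, AncSet E ({x, y} ∪ S) v :=
    ancT_all htr hhd hlast hxT hyT hcolT
  by_cases hV : ∃ w1, (∃ u p', [u, w1, p'] <:+: p ∧ ¬ ColliderTriple E u w1 p') ∧ w1 ∈ O
  · obtain ⟨w0, ⟨⟨g0, g0', ht0, hn0⟩, hw0O⟩⟩ := hV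
    obtain ⟨α, v, β, hpαβ, ⟨⟨u₂, p₂, htripv, hncv⟩, hvO⟩, hclean⟩ :=
      firstHit (fun w1 => (∃ u p', [u, w1, p'] <:+: p ∧ ¬ ColliderTriple E u w1 p') ∧ w1 ∈ O)
        p ⟨w0, triple_center_mem ht0, ⟨g0, g0', ht0, hn0⟩, hw0O⟩
    have hqpre : (α ++ [v]) <+: p := ⟨β, by rw [hpαβ]; simp⟩
    have hqtr : IsTrail E (α ++ [v]) := ⟨htr.1.prefix hqpre, hqpre.sublist.nodup htr.2⟩
    have hvne : v ≠ x := triple_center_ne_head htr.2 hhd htripv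
    have hαne : α ≠ [] := by
      rintro rfl
      simp only [nil_append] at hpαβ
      rw [hpαβ] at hhd
      simp only [head?_cons, Option.some_inj] at hhd
      exact hvne hhd
    have hqhd : (α ++ [v]).head? = some x :=
      head?_append_left (head?_of_append_eq (X := v :: β) hαne (by rw [← hpαβ]; exact hhd))
    have hvT : AncSet E ({x, y} ∪ S) v := hallT v (by rw [hpαβ]; simp)
    have hqinf : ∀ (l1 : List V), l1 <:+: (α ++ [v]) → l1 <:+: p :=
      fun l1 h1 => h1.trans hqpre.isInfix
    have hqnd : (α ++ [v]).Nodup := hqtr.2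
    have hncq : ∀ u w p', [u, w, p'] <:+: (α ++ [v]) → ¬ ColliderTriple E u w p' →
        (w ∈ L ∧ w ∉ O) := by
      intro u w p' hinf hc2
      have hinp : [u, w, p'] <:+: p := hqinf _ hinf
      have hwα : w ∈ α := by
        have hm : w ∈ α ++ [v] := triple_center_mem hinf
        have hne : w ≠ v := triple_center_ne_last hqnd (getLast?_concat) hinf
        rcases mem_append.mp hm with h | h
        · exact h
        · simp at h; exact absurd h hne
      have hwO : w ∉ O := fun hO => hclean w hwα ⟨⟨u, p', hinp, hc2⟩, hO⟩
      have hwS : w ∉ S := fun hS => hnonP u w p' hinp hc2 (Or.inr hS)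
      rcases hcover w with h | h | h
      · exact absurd h hwO
      · exact ⟨h, hwO⟩
      · exact absurd h hwS
    obtain ⟨cs, hcsh, hcsl, hcse, hcsgc⟩ := assemble hcover hOL hOS hLS hx hy
      (α ++ [v]).length (α ++ [v]) x v le_rfl hqtr hqhd (getLast?_concat)
      hx hxT hvO hvT hncq (fun u w p' hinf hc => hcolT u w p' (hqinf _ hinf) hc)
    obtain ⟨σ, hσnd, hσgc, hσh, hσl, hσmem⟩ := gc_dedup cs.length cs _ _ le_rfl hcsgc
    have hvC : v ∈ ({k | InDSEP E O L S x y k} ∪ S : Set V) := by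
      left
      refine ⟨σ, by rw [hσh, hcsh], by rw [hσl, hcsl], hσnd, ?_,
        gc_chain' σ _ _ hσgc, ?_⟩
      · intro w hw
        exact hcse w (hσmem w hw)
      · intro a2 b2 c2 h2
        exact gc_triples σ _ _ hσgc a2 b2 c2 h2
    exact hnonP u₂ v p₂ htripv hncv hvC
  · apply hip
    refine ⟨p, htr, hhd, hlast, hcolT, ?_⟩
    intro u w p' h1 h2
    have hwC : w ∉ ({k | InDSEP E O L S x y k} ∪ S : Set V) := hnonP u w p' h1 h2
    have hwO : w ∉ O := fun hO => hV ⟨w, ⟨u, p', h1, h2⟩, hO⟩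
    rcases hcover w with h | h | h
    · exact absurd h hwO
    · exact h
    · exact absurd (Or.inr h) hwC

end DsepAux

/-- if no inducing path exists between `x` and `y`, then `x` and `y`
are d-separated given `D-SEP(x,y) ∪ S`, and likewise given `D-SEP(y,x) ∪ S`. -/
theorem stmt2 (E : V → V → Prop) (O L S : Set V)
    (hOL : Disjoint O L) (hOS : Disjoint O S) (hLS : Disjoint L S)
    (hcover : ∀ v : V, v ∈ O ∨ v ∈ L ∨ v ∈ S)
    (x y : V) (hx : x ∈ O) (hy : y ∈ O) (hxy : x ≠ y)
    (hip : ¬ HasInducingPath E L S x y) :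
    DSep E ({k | InDSEP E O L S x y k} ∪ S) x y ∧
    DSep E ({k | InDSEP E O L S y x k} ∪ S) x y := by
  constructor
  · exact DsepAux.mainDSep hcover hOL hOS hLS hx hy hip
  · intro hcon
    obtain ⟨l, hl⟩ := hcon
    have hip2 : ¬ HasInducingPath E L S y x := by
      rintro ⟨l2, hl2⟩
      exact hip ⟨l2.reverse, DsepAux.inducingPath_reverse hl2⟩
    exact DsepAux.mainDSep hcover hOL hOS hLS hy hx hip2
      ⟨l.reverse, DsepAux.activePath_reverse hl⟩
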